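/- arXiv:2502.15126 — 2 statements merged into one kernel-verified Lean document; each statement's English description precedes it below -/
import Mathlib

section
/- Let r be a positive integer and let a_T : (α1,α2) → (β1,β2) be an arrow of the Remmel–Whitney quiver that satisfies neither the r-th row rule nor the reverse r-th row rule. Then there exist arrows a_{T1} : (α1,α2) → (λ1,λ2) satisfying the r-th row rule and a_{T2} : (λ1,λ2) → (β1,β2) satisfying the reverse r-th row rule, such that T is the composition tableau of T1 and T2. -/
/- Common combinatorial infrastructure: skew shapes, standard fillings,
   Remmel–Whitney sets, Littlewood–Richardson coefficients, Schur functions,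
   the Remmel–Whitney quiver and its row-rule subquivers, jeu-de-taquin,
   infusion, RS correspondence and diffusion. -/

open scoped Classical BigOperators

noncomputable section

/-- Pairs of partitions (vertices of the quivers). -/
abbrev PP := YoungDiagram × YoungDiagram

namespace RW

/-- Cells of the skew shape `ν/μ`. -/
def SkewCells (ν μ : YoungDiagram) : Finset (ℕ × ℕ) := ν.cells \ μ.cells

/-- `f` is a standard filling of the skew shape `ν/μ`: it vanishes off the skew cells,
restricts to a bijection from the skew cells to `{1, …, n}` where `n` is the number of cells,
and is strictly increasing along rows and down columns. -/
def IsStdFilling (ν μ : YoungDiagram) (f : ℕ × ℕ → ℕ) : Prop :=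
  (∀ c, c ∉ SkewCells ν μ → f c = 0) ∧
  Set.BijOn f (SkewCells ν μ : Set (ℕ × ℕ)) (Set.Icc 1 (SkewCells ν μ).card) ∧
  (∀ i j : ℕ, (i, j) ∈ SkewCells ν μ → (i, j + 1) ∈ SkewCells ν μ → f (i, j) < f (i, j + 1)) ∧
  (∀ i j : ℕ, (i, j) ∈ SkewCells ν μ → (i + 1, j) ∈ SkewCells ν μ → f (i, j) < f (i + 1, j))

/-- Position (cell) of the label `l` in a filling `f` (junk value if no such cell). -/
def posOf (f : ℕ × ℕ → ℕ) (l : ℕ) : ℕ × ℕ :=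
  if h : ∃ c, f c = l then h.choose else (0, 0)

/-- The reverse lexicographic filling of the skew shape `ν/μ`: the numbers `1, …, n` are
entered from right to left along rows, from top row to bottom row. -/
def rlFill (ν μ : YoungDiagram) : ℕ × ℕ → ℕ := fun c =>
  if c ∈ SkewCells ν μ then
    1 + ((SkewCells ν μ).filter (fun c' => c'.1 < c.1 ∨ (c'.1 = c.1 ∧ c.2 < c'.2))).card
  else 0

/-- The Remmel–Whitney set `RW_{ν/μ}(g1/g2)`: standard skew tableaux of shape `ν/μ` such that
(i) if `i+1` is immediately to the left of `i` in `rl(g1/g2)` (same row), then in `T` the label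
`i+1` is strictly to the right of and weakly above `i`; (ii) if `i` is directly above `j` in
`rl(g1/g2)`, then in `T` the label `j` is strictly below and weakly to the left of `i`. -/
def RWSet (ν μ g1 g2 : YoungDiagram) : Set (ℕ × ℕ → ℕ) :=
  {T | IsStdFilling ν μ T ∧
    (∀ i j : ℕ, (i, j) ∈ SkewCells g1 g2 → (i, j + 1) ∈ SkewCells g1 g2 →
      (posOf T (rlFill g1 g2 (i, j + 1))).2 < (posOf T (rlFill g1 g2 (i, j))).2 ∧
      (posOf T (rlFill g1 g2 (i, j))).1 ≤ (posOf T (rlFill g1 g2 (i, j + 1))).1) ∧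
    (∀ i j : ℕ, (i, j) ∈ SkewCells g1 g2 → (i + 1, j) ∈ SkewCells g1 g2 →
      (posOf T (rlFill g1 g2 (i, j))).1 < (posOf T (rlFill g1 g2 (i + 1, j))).1 ∧
      (posOf T (rlFill g1 g2 (i + 1, j))).2 ≤ (posOf T (rlFill g1 g2 (i, j))).2)}

/-! ### Littlewood–Richardson coefficients (via the classical LR rule) -/

/-- Semistandard filling of the skew shape `ν/μ` (positive entries, weakly increasing
along rows, strictly increasing down columns, zero off the shape). -/
def IsSSYT (ν μ : YoungDiagram) (f : ℕ × ℕ → ℕ) : Prop :=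
  (∀ c, c ∉ SkewCells ν μ → f c = 0) ∧
  (∀ c ∈ SkewCells ν μ, 1 ≤ f c) ∧
  (∀ i j : ℕ, (i, j) ∈ SkewCells ν μ → (i, j + 1) ∈ SkewCells ν μ → f (i, j) ≤ f (i, j + 1)) ∧
  (∀ i j : ℕ, (i, j) ∈ SkewCells ν μ → (i + 1, j) ∈ SkewCells ν μ → f (i, j) < f (i + 1, j))

/-- Cells weakly before `c` in the reverse reading order (right-to-left, top-to-bottom). -/
def prefixCells (ν μ : YoungDiagram) (c : ℕ × ℕ) : Finset (ℕ × ℕ) :=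
  (SkewCells ν μ).filter (fun c' => c'.1 < c.1 ∨ (c'.1 = c.1 ∧ c.2 ≤ c'.2))

/-- Number of entries equal to `k` among the cells `s`. -/
def cnt (f : ℕ × ℕ → ℕ) (s : Finset (ℕ × ℕ)) (k : ℕ) : ℕ :=
  (s.filter (fun c => f c = k)).card

/-- Littlewood–Richardson filling of `ν/μ` of content `β`: semistandard, content `β`,
and every prefix of the reverse reading word is a lattice word. -/
def IsLRFilling (ν μ β : YoungDiagram) (f : ℕ × ℕ → ℕ) : Prop :=
  IsSSYT ν μ f ∧
  (∀ k : ℕ, cnt f (SkewCells ν μ) (k + 1) = β.rowLen k) ∧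
  (∀ c ∈ SkewCells ν μ, ∀ k : ℕ,
    cnt f (prefixCells ν μ c) (k + 2) ≤ cnt f (prefixCells ν μ c) (k + 1))

/-- The Littlewood–Richardson coefficient `c^γ_{α β}` (structure constants of Schur
functions), defined by the Littlewood–Richardson rule. -/
def LRcoeff (γ α β : YoungDiagram) : ℕ :=
  Nat.card {f : ℕ × ℕ → ℕ // IsLRFilling γ α β f}

/-! ### The ring `Λ₁ ⊗ Λ₂` and Schur functions -/

/-- Elementary symmetric functions as the free generators of the ring of symmetric
functions `Λ = ℤ[e₁, e₂, …]`; the variable `X k` is `e_{k+1}`. -/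
def eVar (k : ℤ) : MvPolynomial ℕ ℤ :=
  if k = 0 then 1 else if 0 < k then MvPolynomial.X (k.toNat - 1) else 0

/-- The Schur function `s_λ ∈ Λ`, via the dual Jacobi–Trudi determinant. -/
def schurF (lam : YoungDiagram) : MvPolynomial ℕ ℤ :=
  Matrix.det (Matrix.of fun i j : Fin (lam.rowLen 0) =>
    eVar ((lam.colLen i : ℤ) + (j : ℤ) - (i : ℤ)))

/-- The ring `Λ₁ ⊗_ℤ Λ₂` of symmetric functions in two independent sets of variables. -/
abbrev SymAlg := MvPolynomial (ℕ ⊕ ℕ) ℤ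

/-- `s_{α₁,α₂} = s_{α₁}(x) ⬝ s_{α₂}(y) ∈ Λ₁ ⊗ Λ₂`. -/
def sP (v : PP) : SymAlg :=
  MvPolynomial.rename Sum.inl (schurF v.1) * MvPolynomial.rename Sum.inr (schurF v.2)

/-! ### The Remmel–Whitney quiver and row rules -/

/-- `T` indexes an arrow `a_T : v → u` of the Remmel–Whitney quiver `qRW`,
i.e. `T ∈ RW_{u₁/v₁}(v₂/u₂)` and the vertices are distinct (the quiver is graded
and homogeneous). -/
def IsQArrow (v u : PP) (T : ℕ × ℕ → ℕ) : Prop :=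
  v ≠ u ∧ v.1.cells ⊆ u.1.cells ∧ u.2.cells ⊆ v.2.cells ∧
  (SkewCells u.1 v.1).card = (SkewCells v.2 u.2).card ∧
  T ∈ RWSet u.1 v.1 v.2 u.2

/-- The `r`-th row rule filling entry of the (ambient) box `c`:
`r` in the top-left box, decreasing by 1 along rows, increasing by 1 down columns. -/
def rowRuleEntry (r : ℕ) (c : ℕ × ℕ) : ℤ := (r : ℤ) + (c.1 : ℤ) - (c.2 : ℤ)

/-- The `r`-th row rule for a tableau `T` governed by the skew shape `g1/g2`:
every label appears in `T` in its assigned minimum row or lower (rows are 1-indexed). -/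
def RowCond (r : ℕ) (g1 g2 : YoungDiagram) (T : ℕ × ℕ → ℕ) : Prop :=
  ∀ c ∈ SkewCells g1 g2,
    rowRuleEntry r c ≤ ((posOf T (rlFill g1 g2 c)).1 + 1 : ℤ)

/-- The reverse `r`-th row rule: every label appears strictly above its assigned row. -/
def RevRowCond (r : ℕ) (g1 g2 : YoungDiagram) (T : ℕ × ℕ → ℕ) : Prop :=
  ∀ c ∈ SkewCells g1 g2,
    ((posOf T (rlFill g1 g2 c)).1 + 1 : ℤ) < rowRuleEntry r c

/-- Arrows of `qRW` satisfying the `r`-th row rule (`Arr^{≤ r}`). -/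
def IsArrLe (r : ℕ) (v u : PP) (T : ℕ × ℕ → ℕ) : Prop :=
  IsQArrow v u T ∧ RowCond r v.2 u.2 T

/-- Arrows of `qRW` satisfying the reverse `r`-th row rule (`Arr^{> r}`). -/
def IsArrGt (r : ℕ) (v u : PP) (T : ℕ × ℕ → ℕ) : Prop :=
  IsQArrow v u T ∧ RevRowCond r v.2 u.2 T

/-- Alternative indexing (`Arr-bar`): an arrow `ā_T : v → u` for each
`T ∈ RW_{v₂/u₂}(u₁/v₁)`. -/
def IsBarQArrow (v u : PP) (T : ℕ × ℕ → ℕ) : Prop :=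
  v ≠ u ∧ v.1.cells ⊆ u.1.cells ∧ u.2.cells ⊆ v.2.cells ∧
  (SkewCells u.1 v.1).card = (SkewCells v.2 u.2).card ∧
  T ∈ RWSet v.2 u.2 u.1 v.1

/-- Row rule for `Arr-bar`: for every label `l` of `T`, the row-rule entry `R_l` of the
box of `v₂/u₂` occupied by `l` is at most the row `k_l` of `l` in `rl(u₁/v₁)`. -/
def BarRowCond (r : ℕ) (v u : PP) (T : ℕ × ℕ → ℕ) : Prop :=
  ∀ c ∈ SkewCells v.2 u.2,
    rowRuleEntry r c ≤ ((posOf (rlFill u.1 v.1) (T c)).1 + 1 : ℤ)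

/-- Reverse row rule for `Arr-bar`: `R_l > k_l` for all labels `l`. -/
def BarRevRowCond (r : ℕ) (v u : PP) (T : ℕ × ℕ → ℕ) : Prop :=
  ∀ c ∈ SkewCells v.2 u.2,
    ((posOf (rlFill u.1 v.1) (T c)).1 + 1 : ℤ) < rowRuleEntry r c

/-- `Arr-bar^{≤ r}`. -/
def IsBarArrLe (r : ℕ) (v u : PP) (T : ℕ × ℕ → ℕ) : Prop :=
  IsBarQArrow v u T ∧ BarRowCond r v u T

/-- `Arr-bar^{> r}`. -/
def IsBarArrGt (r : ℕ) (v u : PP) (T : ℕ × ℕ → ℕ) : Prop :=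
  IsBarQArrow v u T ∧ BarRevRowCond r v u T

/-! ### Quiver bases of `Λ₁ ⊗ Λ₂` -/

/-- Auxiliary (fuel) recursion for the Remmel–Whitney basis:
`w_v = s_v − Σ_{arrows a rooted at v} w_{t(a)}`.  Since every arrow strictly
decreases `|v₂|`, fuel `|v₂|` computes the basis. -/
def wAux : ℕ → PP → SymAlg
  | 0, v => sP v
  | m + 1, v =>
      sP v - ∑ᶠ u : PP, ∑ᶠ _T ∈ {T : ℕ × ℕ → ℕ | IsQArrow v u T}, wAux m u

/-- The Remmel–Whitney basis `w_{α₁,α₂}` of `Λ₁ ⊗ Λ₂`. -/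
def wB (v : PP) : SymAlg := wAux v.2.card v

/-- Fuel recursion for the basis of the subquiver `qRW^r`. -/
def tauAux (r : ℕ) : ℕ → PP → SymAlg
  | 0, v => sP v
  | m + 1, v =>
      sP v - ∑ᶠ u : PP, ∑ᶠ _T ∈ {T : ℕ × ℕ → ℕ | IsArrLe r v u T}, tauAux r m u

/-- The basis `τ^r_{α₁,α₂}` of `Λ₁ ⊗ Λ₂` attached to the subquiver `qRW^r`. -/
def tauB (r : ℕ) (v : PP) : SymAlg := tauAux r v.2.card v

/-- Fuel recursion for the `qRW^r` basis in the alternative (`Arr-bar`) indexing. -/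
def tauBarAux (r : ℕ) : ℕ → PP → SymAlg
  | 0, v => sP v
  | m + 1, v =>
      sP v - ∑ᶠ u : PP, ∑ᶠ _T ∈ {T : ℕ × ℕ → ℕ | IsBarArrLe r v u T}, tauBarAux r m u

/-- The basis `τ^r_{α₁,α₂}` of `Λ₁ ⊗ Λ₂` (alternative arrow indexing). -/
def tauBarB (r : ℕ) (v : PP) : SymAlg := tauBarAux r v.2.card v

end RW

namespace RW

/-! ### Jeu-de-taquin -/

/-- One jeu-de-taquin slide with the gap at `g`: repeatedly move into the gap the smaller
of the two labels to the right of and below the gap, until both are absent (fuel recursion).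
Returns the new filling and the final position of the gap. -/
def slideFrom : ℕ → (ℕ × ℕ → ℕ) → ℕ × ℕ → ((ℕ × ℕ → ℕ) × (ℕ × ℕ))
  | 0, f, g => (f, g)
  | n + 1, f, g =>
    if f (g.1, g.2 + 1) = 0 ∧ f (g.1 + 1, g.2) = 0 then (f, g)
    else
      let c : ℕ × ℕ :=
        if f (g.1 + 1, g.2) = 0 ∨ (f (g.1, g.2 + 1) ≠ 0 ∧ f (g.1, g.2 + 1) < f (g.1 + 1, g.2))
        then (g.1, g.2 + 1) else (g.1 + 1, g.2)
      slideFrom n (Function.update (Function.update f g (f c)) c 0) c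

/-- A (not necessarily standard) skew tableau: an outer shape, an inner shape and a filling. -/
structure SkewT where
  outer : YoungDiagram
  inner : YoungDiagram
  entry : ℕ × ℕ → ℕ

/-- A standard skew tableau. -/
def IsStdSkewT (S : SkewT) : Prop :=
  S.inner.cells ⊆ S.outer.cells ∧ IsStdFilling S.outer S.inner S.entry

/-- `S'` is obtained from `S` by a single jeu-de-taquin slide into an inner corner. -/
def JdtStep (S S' : SkewT) : Prop :=
  ∃ c : ℕ × ℕ, c ∈ S.inner.cells ∧ (c.1 + 1, c.2) ∉ S.inner.cells ∧
    (c.1, c.2 + 1) ∉ S.inner.cells ∧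
    S'.entry = (slideFrom (S.outer.card + 1) S.entry c).1 ∧
    S'.inner.cells = S.inner.cells.erase c ∧
    S'.outer.cells = S.outer.cells.erase (slideFrom (S.outer.card + 1) S.entry c).2

/-- Jeu-de-taquin equivalence: the equivalence relation generated by single slides
(this allows sequences of slides into inner or outer corners). -/
def JdtEquiv : SkewT → SkewT → Prop := Relation.EqvGen JdtStep

/-- Rectification: a straight-shape tableau obtained from `S` by a sequence of
jeu-de-taquin slides into inner corners (by the fundamental theorem it is unique
for standard skew tableaux). -/
def Rect (S : SkewT) : SkewT :=
  if h : ∃ S', Relation.ReflTransGen JdtStep S S' ∧ S'.inner.cells = ∅ then h.choose else S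

/-- The Young diagram with cell set `s` (junk value `⊥` if `s` is not a lower set). -/
def ofCells (s : Finset (ℕ × ℕ)) : YoungDiagram :=
  if h : IsLowerSet (s : Set (ℕ × ℕ)) then ⟨s, h⟩ else ⊥

/-- The restriction `T^{≤ k}` of a standard skew tableau to the labels `{1, …, k}`. -/
def splitLe (S : SkewT) (k : ℕ) : SkewT where
  outer := ofCells (S.inner.cells ∪
    S.outer.cells.filter (fun c => 1 ≤ S.entry c ∧ S.entry c ≤ k))
  inner := S.inner
  entry := fun c => if 1 ≤ S.entry c ∧ S.entry c ≤ k then S.entry c else 0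

/-- The restriction `T^{> k}` of a standard skew tableau to the labels `{k+1, …, n}`,
with all labels decreased by `k`. -/
def splitGt (S : SkewT) (k : ℕ) : SkewT where
  outer := S.outer
  inner := ofCells (S.inner.cells ∪
    S.outer.cells.filter (fun c => 1 ≤ S.entry c ∧ S.entry c ≤ k))
  entry := fun c => if k < S.entry c then S.entry c - k else 0

/-! ### Infusion -/

/-- Auxiliary recursion for infusion: perform jeu-de-taquin slides on the first component
into the boxes of `T1` in decreasing order of the labels of `T1`, recording in the second
component the vacated outer corners (the corner vacated while sliding into the box of `T1`
labeled `i` gets the label `i`). -/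
def infuseAux (N : ℕ) (T1 : ℕ × ℕ → ℕ) :
    ℕ → ((ℕ × ℕ → ℕ) × (ℕ × ℕ → ℕ)) → ((ℕ × ℕ → ℕ) × (ℕ × ℕ → ℕ))
  | 0, p => p
  | i + 1, p =>
    if ∃ c, T1 c = i + 1 then
      let res := slideFrom N p.1 (posOf T1 (i + 1))
      infuseAux N T1 i (res.1, Function.update p.2 res.2 (i + 1))
    else infuseAux N T1 i p

/-- Infusion of `T2` (the outer tableau) past `T1` (the inner tableau with `n` boxes):
the first component is `Slide_{T1}(T2)` and the second is `Slide^{T2}(T1)`. -/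
def infuse (N n : ℕ) (T1 T2 : ℕ × ℕ → ℕ) : (ℕ × ℕ → ℕ) × (ℕ × ℕ → ℕ) :=
  infuseAux N T1 n (T2, fun _ => 0)

/-! ### The star operation `α*β` (for possibly skew shapes) -/

/-- Outer shape of `lo * up` (`up` is placed above and entirely to the right of `lo`),
where `lo = lo₁/lo₂` and `up = up₁/up₂` are skew shapes. -/
def starOuter (lo1 lo2 up1 up2 : YoungDiagram) : YoungDiagram :=
  ofCells ((Finset.range (up1.colLen 0) ×ˢ Finset.range (lo1.rowLen 0)) ∪
    up1.cells.image (fun c => (c.1, c.2 + lo1.rowLen 0)) ∪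
    lo1.cells.image (fun c => (c.1 + up1.colLen 0, c.2)))

/-- Inner shape of `lo * up`. -/
def starInner (lo1 lo2 up1 up2 : YoungDiagram) : YoungDiagram :=
  ofCells ((Finset.range (up1.colLen 0) ×ˢ Finset.range (lo1.rowLen 0)) ∪
    up2.cells.image (fun c => (c.1, c.2 + lo1.rowLen 0)) ∪
    lo2.cells.image (fun c => (c.1 + up1.colLen 0, c.2)))

/-! ### Reading words, Robinson–Schensted and diffusion -/

/-- The reading word of a filling of the skew shape `ν/μ`: labels are read from top to
bottom and right to left. -/
def readingWordOf (ν : YoungDiagram) (f : ℕ × ℕ → ℕ) : List ℕ :=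
  (List.range (ν.colLen 0)).flatMap (fun i =>
    (((List.range (ν.rowLen i)).reverse).map (fun j => f (i, j))).filter (fun v => v != 0))

/-- The inverse of a permutation word (a word `w` listing `1, …, n` in some order). -/
def invWord (w : List ℕ) : List ℕ :=
  (List.range w.length).map (fun i => w.idxOf (i + 1) + 1)

/-- The filling of the skew shape `ν/μ` whose reading word is `w`. -/
def fillByWord (ν μ : YoungDiagram) (w : List ℕ) : ℕ × ℕ → ℕ := fun c =>
  if c ∈ SkewCells ν μ then w.getD (rlFill ν μ c - 1) 0 else 0

/-- Reverse column insertion: bump the value `v` leftwards through columns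
`j-1, j-2, …, 0`, at each step replacing the largest entry smaller than the carried value;
returns the final filling and the expelled letter. -/
def revBump (N : ℕ) : ℕ → (ℕ × ℕ → ℕ) → ℕ → ((ℕ × ℕ → ℕ) × ℕ)
  | 0, f, v => (f, v)
  | j + 1, f, v =>
    let s := (Finset.range N).filter (fun i => 0 < f (i, j) ∧ f (i, j) < v)
    if h : s.Nonempty then
      revBump N j (Function.update f (s.max' h, j) v) (f (s.max' h, j))
    else (f, v)

/-- The inverse Robinson–Schensted correspondence (via reverse column insertion):
given an insertion tableau `P` and a recording tableau `Q` with `m` labels, produce the word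
`(a_1, …, a_m)`; the label `m` of `Q` is removed first, expelling `a_m`, and so on. -/
def RSinvWord (N : ℕ) : ℕ → (ℕ × ℕ → ℕ) → (ℕ × ℕ → ℕ) → List ℕ
  | 0, _, _ => []
  | m + 1, P, Q =>
    if ∃ c, Q c = m + 1 then
      let c := posOf Q (m + 1)
      let rb := revBump N c.2 (Function.update P c 0) (P c)
      RSinvWord N m rb.1 Q ++ [rb.2]
    else RSinvWord N m P Q ++ [0]

/-- `θ⁻¹(P, Q)` for the skew shape `ν/μ`: the filling of `ν/μ` by the word `RS⁻¹(P, Q)`. -/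
def thetaInv (ν μ : YoungDiagram) (P Q : ℕ × ℕ → ℕ) : ℕ × ℕ → ℕ :=
  fillByWord ν μ (RSinvWord ((SkewCells ν μ).card + 1) (SkewCells ν μ).card P Q)

/-- The unique element of `RW(δ)` for a straight shape `δ`: row `i` carries the labels
`δ₁ + ⋯ + δ_i + 1, …, δ₁ + ⋯ + δ_{i+1}` in increasing order. -/
def uElem (δ : YoungDiagram) : ℕ × ℕ → ℕ := fun c =>
  if c ∈ δ.cells then (Finset.range c.1).sum δ.rowLen + c.2 + 1 else 0

/-! ### Vertical strips -/

/-- `ν/μ` is a vertical strip of length `q` (no two boxes in the same row). -/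
def IsVStripOf (ν μ : YoungDiagram) (q : ℕ) : Prop :=
  μ.cells ⊆ ν.cells ∧ (SkewCells ν μ).card = q ∧
  ∀ c ∈ SkewCells ν μ, ∀ c' ∈ SkewCells ν μ, c ≠ c' → c.1 ≠ c'.1

/-- The standard tableau `T_{ν/μ}` on a vertical strip `ν/μ`, labeled `1, …, q`
from top to bottom. -/
def vstripTab (ν μ : YoungDiagram) : ℕ × ℕ → ℕ := fun c =>
  if c ∈ SkewCells ν μ then 1 + ((SkewCells ν μ).filter (fun c' => c'.1 < c.1)).card else 0

/-- The column partition `1^p`. -/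
def colDiagram (p : ℕ) : YoungDiagram :=
  ofCells (Finset.range p ×ˢ ({0} : Finset ℕ))

/-! ### Diffusion and the arrows `Diff_T(a_U)` -/

/-- Given `T ∈ RW_γ(β*α₂)` and `U ∈ RW_{γ/λ₂}(λ₁/α₁)` (an arrow of `Arr-bar` rooted at
`(α₁,γ)`), the filling `W` of the skew shape `β*α₂` produced by diffusion: extend `U` by the
unique element of `RW(λ₂)` to a straight tableau `Ũ` of shape `γ` and apply `θ⁻¹(Ũ, T)`. -/
def diffFill (α2 β : YoungDiagram) (T U : ℕ × ℕ → ℕ) (lam2 : YoungDiagram) : ℕ × ℕ → ℕ :=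
  let k := lam2.card
  let Ut : ℕ × ℕ → ℕ := fun c =>
    if c ∈ lam2.cells then uElem lam2 c else if U c ≠ 0 then U c + k else 0
  thetaInv (starOuter β ⊥ α2 ⊥) (starInner β ⊥ α2 ⊥) Ut T

/-- The arrow `Diff_T(a_U)` rooted at `(α₁,α₂)` satisfies the reverse `r`-th row rule
(the trivial arrow counts as satisfying it, vacuously):
the part of `W^{> |λ₂|}` occupying the `α₂`-region of `β*α₂` defines a tableau of shape
`α₂/ν₂` (labels renumbered), governed by `ν₁/α₁`, and every label lies strictly above its
assigned row. -/
def DiffArrowRev (r : ℕ) (α1 α2 β : YoungDiagram) (T : ℕ × ℕ → ℕ) (u : PP)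
    (U : ℕ × ℕ → ℕ) : Prop :=
  let w0 := β.rowLen 0
  let k := u.2.card
  let W := diffFill α2 β T U u.2
  let A := (SkewCells (starOuter β ⊥ α2 ⊥) (starInner β ⊥ α2 ⊥)).filter
    (fun c => w0 ≤ c.2 ∧ k < W c)
  let L := A.image (fun c => W c - k)
  let ν1 := ofCells (α1.cells ∪ (SkewCells u.1 α1).filter (fun c => rlFill u.1 α1 c ∈ L))
  let V : ℕ × ℕ → ℕ := fun c =>
    if (c.1, c.2 + w0) ∈ A then (L.filter (fun x => x ≤ W (c.1, c.2 + w0) - k)).card else 0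
  ∀ c : ℕ × ℕ, (c.1, c.2 + w0) ∈ A →
    ((posOf (rlFill ν1 α1) (V c)).1 + 1 : ℤ) < rowRuleEntry r c

/-- The unique element of `RW_γ(1^p * α₂)` for `γ/α₂` a vertical strip: the `α₂`-cells
carry the unique element of `RW(α₂)` and the strip cells carry `|α₂| + T_{γ/α₂}`. -/
def starColTab (γ α2 : YoungDiagram) : ℕ × ℕ → ℕ := fun c =>
  if c ∈ α2.cells then uElem α2 c
  else if c ∈ SkewCells γ α2 then α2.card + vstripTab γ α2 c else 0

/-! ### Composition of arrows -/

/-- The composition tableau of `T1 ∈ RW_{λ₁/α₁}(α₂/λ₂)` and `T2 ∈ RW_{β₁/λ₁}(λ₂/β₂)`: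
a filling of `β₁/α₁`, where a box of `λ₁/α₁` with label `i` in `T1` receives the
`rl(α₂/β₂)`-label of the box of `α₂/λ₂` with `rl(α₂/λ₂)`-label `i`, and similarly for
boxes of `β₁/λ₁` using `T2` and `rl(λ₂/β₂)`. -/
def compTab (α1 lam1 β1 α2 lam2 β2 : YoungDiagram) (T1 T2 : ℕ × ℕ → ℕ) : ℕ × ℕ → ℕ :=
  fun c =>
    if c ∈ SkewCells lam1 α1 then rlFill α2 β2 (posOf (rlFill α2 lam2) (T1 c))
    else if c ∈ SkewCells β1 lam1 then rlFill α2 β2 (posOf (rlFill lam2 β2) (T2 c))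
    else 0

end RW

namespace RW

/-! #### Auxiliary development for the splitting theorem -/

/-- The reading order: `prec c' c` means `c'` comes strictly before `c` in the
reverse lexicographic reading (top-to-bottom, right-to-left). -/
def prec (c' c : ℕ × ℕ) : Prop := c'.1 < c.1 ∨ (c'.1 = c.1 ∧ c.2 < c'.2)

lemma prec_irrefl (c : ℕ × ℕ) : ¬ prec c c := by
  rintro (h | ⟨-, h⟩) <;> exact lt_irrefl _ h

lemma prec_trans {a b c : ℕ × ℕ} (h1 : prec a b) (h2 : prec b c) : prec a c := by
  rcases h1 with h1 | ⟨e1, h1⟩ <;> rcases h2 with h2 | ⟨e2, h2⟩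
  · exact Or.inl (h1.trans h2)
  · exact Or.inl (e2 ▸ h1)
  · exact Or.inl (e1 ▸ h2)
  · exact Or.inr ⟨e1.trans e2, h2.trans h1⟩

lemma prec_total {a b : ℕ × ℕ} (h : a ≠ b) : prec a b ∨ prec b a := by
  rcases lt_trichotomy a.1 b.1 with h1 | h1 | h1
  · exact Or.inl (Or.inl h1)
  · rcases lt_trichotomy a.2 b.2 with h2 | h2 | h2
    · exact Or.inr (Or.inr ⟨h1.symm, h2⟩)
    · exact absurd (Prod.ext h1 h2) h
    · exact Or.inl (Or.inr ⟨h1, h2⟩)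
  · exact Or.inr (Or.inl h1)

lemma rlFill_eq_zero {ν μ : YoungDiagram} {c : ℕ × ℕ} (h : c ∉ SkewCells ν μ) :
    rlFill ν μ c = 0 := by simp [rlFill, h]

lemma rlFill_mem {ν μ : YoungDiagram} {c : ℕ × ℕ} (h : c ∈ SkewCells ν μ) :
    rlFill ν μ c = 1 + ((SkewCells ν μ).filter (fun c' => prec c' c)).card := by
  rw [rlFill, if_pos h]
  unfold prec
  congr!

lemma rlFill_pos {ν μ : YoungDiagram} {c : ℕ × ℕ} (h : c ∈ SkewCells ν μ) :
    1 ≤ rlFill ν μ c := by rw [rlFill_mem h]; omega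

lemma rlFill_le {ν μ : YoungDiagram} {c : ℕ × ℕ} (h : c ∈ SkewCells ν μ) :
    rlFill ν μ c ≤ (SkewCells ν μ).card := by
  rw [rlFill_mem h]
  have hsub : (SkewCells ν μ).filter (fun c' => prec c' c) ⊆ (SkewCells ν μ).erase c := by
    intro x hx
    rw [Finset.mem_filter] at hx
    refine Finset.mem_erase.2 ⟨fun he => prec_irrefl c (he ▸ hx.2), hx.1⟩
  have := Finset.card_le_card hsub
  have hc := Finset.card_erase_of_mem h
  have : ((SkewCells ν μ).filter (fun c' => prec c' c)).card ≤ (SkewCells ν μ).card - 1 := by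
    omega
  have hpos : 1 ≤ (SkewCells ν μ).card := Finset.card_pos.2 ⟨c, h⟩
  omega

lemma mem_of_rlFill_pos {ν μ : YoungDiagram} {c : ℕ × ℕ} (h : rlFill ν μ c ≠ 0) :
    c ∈ SkewCells ν μ := by
  by_contra hc; exact h (rlFill_eq_zero hc)

lemma rlFill_lt_of_prec {ν μ : YoungDiagram} {c c' : ℕ × ℕ}
    (hc : c ∈ SkewCells ν μ) (hc' : c' ∈ SkewCells ν μ) (h : prec c c') :
    rlFill ν μ c < rlFill ν μ c' := by
  rw [rlFill_mem hc, rlFill_mem hc']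
  have hss : (SkewCells ν μ).filter (fun x => prec x c) ⊂
      (SkewCells ν μ).filter (fun x => prec x c') := by
    refine Finset.ssubset_iff_of_subset ?_ |>.2 ⟨c, ?_, ?_⟩
    · intro x hx
      rw [Finset.mem_filter] at hx ⊢
      exact ⟨hx.1, prec_trans hx.2 h⟩
    · exact Finset.mem_filter.2 ⟨hc, h⟩
    · intro hx; exact prec_irrefl c (Finset.mem_filter.1 hx).2
  have := Finset.card_lt_card hss
  omega

lemma rlFill_lt_iff_prec {ν μ : YoungDiagram} {c c' : ℕ × ℕ}
    (hc : c ∈ SkewCells ν μ) (hc' : c' ∈ SkewCells ν μ) :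
    rlFill ν μ c < rlFill ν μ c' ↔ prec c c' := by
  refine ⟨fun h => ?_, rlFill_lt_of_prec hc hc'⟩
  by_contra hp
  rcases eq_or_ne c c' with rfl | hne
  · exact lt_irrefl _ h
  · rcases prec_total hne with h' | h'
    · exact hp h'
    · exact absurd (rlFill_lt_of_prec hc' hc h') (by omega)

lemma rlFill_injOn {ν μ : YoungDiagram} {c c' : ℕ × ℕ}
    (hc : c ∈ SkewCells ν μ) (hc' : c' ∈ SkewCells ν μ)
    (h : rlFill ν μ c = rlFill ν μ c') : c = c' := by
  by_contra hne
  rcases prec_total hne with h' | h'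
  · exact absurd (rlFill_lt_of_prec hc hc' h') (by omega)
  · exact absurd (rlFill_lt_of_prec hc' hc h') (by omega)

lemma rlFill_surj {ν μ : YoungDiagram} {l : ℕ} (h1 : 1 ≤ l)
    (h2 : l ≤ (SkewCells ν μ).card) : ∃ d ∈ SkewCells ν μ, rlFill ν μ d = l := by
  have hmaps : ∀ c ∈ SkewCells ν μ, rlFill ν μ c ∈ Finset.Icc 1 (SkewCells ν μ).card :=
    fun c hc => Finset.mem_Icc.2 ⟨rlFill_pos hc, rlFill_le hc⟩
  have hcard : (Finset.Icc 1 (SkewCells ν μ).card).card ≤ (SkewCells ν μ).card := by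
    rw [Nat.card_Icc]; omega
  have := Finset.surj_on_of_inj_on_of_card_le (s := SkewCells ν μ)
    (t := Finset.Icc 1 (SkewCells ν μ).card) (fun c _ => rlFill ν μ c)
    (fun c hc => hmaps c hc) (fun c c' hc hc' he => rlFill_injOn hc hc' he) hcard
  obtain ⟨d, hd, hdl⟩ := this l (Finset.mem_Icc.2 ⟨h1, h2⟩)
  exact ⟨d, hd, hdl.symm⟩

lemma posOf_eq {f : ℕ × ℕ → ℕ} {c : ℕ × ℕ} {l : ℕ} (hc : f c = l)
    (huniq : ∀ c', f c' = l → c' = c) : posOf f l = c := by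
  rw [posOf, dif_pos ⟨c, hc⟩]
  exact huniq _ (Exists.choose_spec (⟨c, hc⟩ : ∃ c', f c' = l))

lemma posOf_rlFill {ν μ : YoungDiagram} {d : ℕ × ℕ} (hd : d ∈ SkewCells ν μ) :
    posOf (rlFill ν μ) (rlFill ν μ d) = d := by
  refine posOf_eq rfl (fun c' h => ?_)
  have hc' : c' ∈ SkewCells ν μ := by
    apply mem_of_rlFill_pos; rw [h]; exact Nat.one_le_iff_ne_zero.1 (rlFill_pos hd)
  exact rlFill_injOn hc' hd h

end RW

namespace RW
/-! #### Standard filling lemmas and chain lemmas -/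

lemma skew_horiz {ν μ : YoungDiagram} {x j1 j j2 : ℕ} (h1 : (x, j1) ∈ SkewCells ν μ)
    (h2 : (x, j2) ∈ SkewCells ν μ) (ha : j1 ≤ j) (hb : j ≤ j2) :
    (x, j) ∈ SkewCells ν μ := by
  simp only [SkewCells, Finset.mem_sdiff] at h1 h2 ⊢
  constructor
  · exact ν.up_left_mem le_rfl hb (by simpa using h2.1)
  · intro hc
    exact h1.2 (μ.up_left_mem le_rfl ha (by simpa using hc))

lemma skew_vert {ν μ : YoungDiagram} {j x1 x x2 : ℕ} (h1 : (x1, j) ∈ SkewCells ν μ)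
    (h2 : (x2, j) ∈ SkewCells ν μ) (ha : x1 ≤ x) (hb : x ≤ x2) :
    (x, j) ∈ SkewCells ν μ := by
  simp only [SkewCells, Finset.mem_sdiff] at h1 h2 ⊢
  constructor
  · exact ν.up_left_mem hb le_rfl (by simpa using h2.1)
  · intro hc
    exact h1.2 (μ.up_left_mem ha le_rfl (by simpa using hc))

lemma skew_corner {ν μ : YoungDiagram} {c' c : ℕ × ℕ} (h1 : c' ∈ SkewCells ν μ)
    (h2 : c ∈ SkewCells ν μ) (ha : c'.1 ≤ c.1) (hb : c'.2 ≤ c.2) :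
    (c.1, c'.2) ∈ SkewCells ν μ := by
  simp only [SkewCells, Finset.mem_sdiff] at h1 h2 ⊢
  constructor
  · exact ν.up_left_mem le_rfl hb (by simpa using h2.1)
  · intro hc
    exact h1.2 (μ.up_left_mem ha le_rfl (by simpa using hc))

section StdLemmas
variable {ν μ : YoungDiagram} {f : ℕ × ℕ → ℕ}

lemma std_posOf_self (hf : IsStdFilling ν μ f) {c : ℕ × ℕ} (hc : c ∈ SkewCells ν μ) :
    posOf f (f c) = c := by
  refine posOf_eq rfl (fun c' h => ?_)
  have h1 : 1 ≤ f c := (hf.2.1.mapsTo hc).1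
  have hc' : c' ∈ SkewCells ν μ := by
    by_contra hx
    rw [hf.1 c' hx] at h; omega
  exact hf.2.1.injOn hc' hc h

lemma std_posOf (hf : IsStdFilling ν μ f) {l : ℕ} (h1 : 1 ≤ l)
    (h2 : l ≤ (SkewCells ν μ).card) :
    posOf f l ∈ SkewCells ν μ ∧ f (posOf f l) = l := by
  have hl : l ∈ Set.Icc 1 (SkewCells ν μ).card := ⟨h1, h2⟩
  obtain ⟨c, hc, hcl⟩ := hf.2.1.surjOn hl
  have hc : c ∈ SkewCells ν μ := hc
  have : posOf f l = c := by
    rw [← hcl]; exact std_posOf_self hf hc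
  rw [this]; exact ⟨hc, hcl⟩

lemma std_row_chain (hf : IsStdFilling ν μ f) :
    ∀ (k : ℕ) {x y : ℕ}, (x, y) ∈ SkewCells ν μ → (x, y + k) ∈ SkewCells ν μ →
      f (x, y) + k ≤ f (x, y + k) := by
  intro k
  induction k with
  | zero => intro x y h1 h2; simp
  | succ k ih =>
    intro x y h1 h2
    have hm : (x, y + k) ∈ SkewCells ν μ :=
      skew_horiz h1 h2 (Nat.le_add_right _ _) (by omega)
    have := ih h1 hm
    have hstep := hf.2.2.1 x (y + k) hm (by rw [show y + k + 1 = y + (k+1) by ring]; exact h2)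
    rw [show y + (k + 1) = y + k + 1 by ring]
    omega

lemma std_col_chain (hf : IsStdFilling ν μ f) :
    ∀ (k : ℕ) {x y : ℕ}, (x, y) ∈ SkewCells ν μ → (x + k, y) ∈ SkewCells ν μ →
      f (x, y) + k ≤ f (x + k, y) := by
  intro k
  induction k with
  | zero => intro x y h1 h2; simp
  | succ k ih =>
    intro x y h1 h2
    have hm : (x + k, y) ∈ SkewCells ν μ :=
      skew_vert h1 h2 (Nat.le_add_right _ _) (by omega)
    have := ih h1 hm
    have hstep := hf.2.2.2 (x + k) y hm (by rw [show x + k + 1 = x + (k+1) by ring]; exact h2)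
    rw [show x + (k + 1) = x + k + 1 by ring]
    omega

lemma std_mono (hf : IsStdFilling ν μ f) {c' c : ℕ × ℕ}
    (hc' : c' ∈ SkewCells ν μ) (hc : c ∈ SkewCells ν μ)
    (h1 : c'.1 ≤ c.1) (h2 : c'.2 ≤ c.2) (hne : c' ≠ c) : f c' < f c := by
  obtain ⟨x', y'⟩ := c'
  obtain ⟨x, y⟩ := c
  simp only at h1 h2
  have hcorner : (x, y') ∈ SkewCells ν μ := skew_corner hc' hc h1 h2
  have hv := std_col_chain hf (x - x') hc' (by rw [show x' + (x - x') = x by omega]; exact hcorner)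
  rw [show x' + (x - x') = x by omega] at hv
  have hh := std_row_chain hf (y - y') hcorner (by rw [show y' + (y - y') = y by omega]; exact hc)
  rw [show y' + (y - y') = y by omega] at hh
  have hne' : x' ≠ x ∨ y' ≠ y := by
    by_contra hcon
    push_neg at hcon
    exact hne (by rw [hcon.1, hcon.2])
  omega

end StdLemmas

section PosChains

variable (a2 b2 : YoungDiagram) (T : ℕ × ℕ → ℕ)

/-- Position in `T` of the label of the skew cell `c` of `a2/b2`. -/
def pos2 (c : ℕ × ℕ) : ℕ × ℕ := posOf T (rlFill a2 b2 c)

variable {a2 b2 T}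
variable (hH : ∀ i j : ℕ, (i, j) ∈ SkewCells a2 b2 → (i, j + 1) ∈ SkewCells a2 b2 →
      (pos2 a2 b2 T (i, j + 1)).2 < (pos2 a2 b2 T (i, j)).2 ∧
      (pos2 a2 b2 T (i, j)).1 ≤ (pos2 a2 b2 T (i, j + 1)).1)
variable (hV : ∀ i j : ℕ, (i, j) ∈ SkewCells a2 b2 → (i + 1, j) ∈ SkewCells a2 b2 →
      (pos2 a2 b2 T (i, j)).1 < (pos2 a2 b2 T (i + 1, j)).1 ∧
      (pos2 a2 b2 T (i + 1, j)).2 ≤ (pos2 a2 b2 T (i, j)).2)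

include hH in
lemma pos2_row_chain : ∀ (k : ℕ) {x y : ℕ},
    (x, y) ∈ SkewCells a2 b2 → (x, y + k) ∈ SkewCells a2 b2 →
    (pos2 a2 b2 T (x, y + k)).2 + k ≤ (pos2 a2 b2 T (x, y)).2 ∧
      (pos2 a2 b2 T (x, y)).1 ≤ (pos2 a2 b2 T (x, y + k)).1 := by
  intro k
  induction k with
  | zero => intro x y h1 h2; simp
  | succ k ih =>
    intro x y h1 h2
    have hm : (x, y + k) ∈ SkewCells a2 b2 :=
      skew_horiz h1 h2 (Nat.le_add_right _ _) (by omega)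
    have h2' : (x, y + k + 1) ∈ SkewCells a2 b2 := by
      rw [show y + k + 1 = y + (k+1) by ring]; exact h2
    have := ih h1 hm
    have hstep := hH x (y + k) hm h2'
    rw [show y + (k + 1) = y + k + 1 by ring]
    omega

include hV in
lemma pos2_col_chain : ∀ (k : ℕ) {x y : ℕ},
    (x, y) ∈ SkewCells a2 b2 → (x + k, y) ∈ SkewCells a2 b2 →
    (pos2 a2 b2 T (x, y)).1 + k ≤ (pos2 a2 b2 T (x + k, y)).1 ∧
      (pos2 a2 b2 T (x + k, y)).2 ≤ (pos2 a2 b2 T (x, y)).2 := by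
  intro k
  induction k with
  | zero => intro x y h1 h2; simp
  | succ k ih =>
    intro x y h1 h2
    have hm : (x + k, y) ∈ SkewCells a2 b2 :=
      skew_vert h1 h2 (Nat.le_add_right _ _) (by omega)
    have h2' : (x + k + 1, y) ∈ SkewCells a2 b2 := by
      rw [show x + k + 1 = x + (k+1) by ring]; exact h2
    have := ih h1 hm
    have hstep := hV (x + k) y hm h2'
    rw [show x + (k + 1) = x + k + 1 by ring]
    omega

include hH hV in
lemma key_col {c' c : ℕ × ℕ} (hc' : c' ∈ SkewCells a2 b2) (hc : c ∈ SkewCells a2 b2)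
    (h1 : c'.1 ≤ c.1) (h2 : c'.2 < c.2) :
    (pos2 a2 b2 T c).2 < (pos2 a2 b2 T c').2 := by
  obtain ⟨x', y'⟩ := c'
  obtain ⟨x, y⟩ := c
  simp only at h1 h2
  have hcorner : (x, y') ∈ SkewCells a2 b2 := skew_corner hc' hc h1 (le_of_lt h2)
  have hcol := pos2_col_chain hV (x - x') hc'
    (by rw [show x' + (x - x') = x by omega]; exact hcorner)
  rw [show x' + (x - x') = x by omega] at hcol
  have hrow := pos2_row_chain hH (y - y') hcorner
    (by rw [show y' + (y - y') = y by omega]; exact hc)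
  rw [show y' + (y - y') = y by omega] at hrow
  omega

end PosChains

section Construction

variable (r : ℕ) (a1 a2 b1 b2 : YoungDiagram) (T : ℕ × ℕ → ℕ)

/-- The defect statistic of a skew cell of `a2/b2`: row of its label in `T` (1-indexed)
minus its row-rule entry. -/
def Dv (c : ℕ × ℕ) : ℤ := ((pos2 a2 b2 T c).1 + 1 : ℤ) - rowRuleEntry r c

/-- Cells of `a2/b2` whose label satisfies the `r`-th row rule. -/
def GoodS : Finset (ℕ × ℕ) := (SkewCells a2 b2).filter (fun c => 0 ≤ Dv r a2 b2 T c)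

/-- Cell of `a2/b2` carrying the label `l`. -/
def cellOf (l : ℕ) : ℕ × ℕ := posOf (rlFill a2 b2) l

/-- Cells of `b1/a1` whose `T`-label corresponds to a good cell. -/
def goodT : Finset (ℕ × ℕ) :=
  (SkewCells b1 a1).filter (fun c => cellOf a2 b2 (T c) ∈ GoodS r a2 b2 T)

variable {r a1 a2 b1 b2 T}
variable (hT : IsQArrow (a1, a2) (b1, b2) T)

include hT

lemma hT_std : IsStdFilling b1 a1 T := hT.2.2.2.2.1

lemma hT_card : (SkewCells b1 a1).card = (SkewCells a2 b2).card := hT.2.2.2.1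

lemma hT_H : ∀ i j : ℕ, (i, j) ∈ SkewCells a2 b2 → (i, j + 1) ∈ SkewCells a2 b2 →
    (pos2 a2 b2 T (i, j + 1)).2 < (pos2 a2 b2 T (i, j)).2 ∧
    (pos2 a2 b2 T (i, j)).1 ≤ (pos2 a2 b2 T (i, j + 1)).1 := hT.2.2.2.2.2.1

lemma hT_V : ∀ i j : ℕ, (i, j) ∈ SkewCells a2 b2 → (i + 1, j) ∈ SkewCells a2 b2 →
    (pos2 a2 b2 T (i, j)).1 < (pos2 a2 b2 T (i + 1, j)).1 ∧
    (pos2 a2 b2 T (i + 1, j)).2 ≤ (pos2 a2 b2 T (i, j)).2 := hT.2.2.2.2.2.2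

/-- `pos2` of a skew cell is a cell of `b1/a1` carrying the right label. -/
lemma pos2_spec {d : ℕ × ℕ} (hd : d ∈ SkewCells a2 b2) :
    pos2 a2 b2 T d ∈ SkewCells b1 a1 ∧ T (pos2 a2 b2 T d) = rlFill a2 b2 d := by
  have h1 := rlFill_pos hd
  have h2 := rlFill_le hd
  rw [← hT_card hT] at h2
  exact std_posOf (hT_std hT) h1 h2

lemma cellOf_spec {l : ℕ} (h1 : 1 ≤ l) (h2 : l ≤ (SkewCells a2 b2).card) :
    cellOf a2 b2 l ∈ SkewCells a2 b2 ∧ rlFill a2 b2 (cellOf a2 b2 l) = l := by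
  obtain ⟨d, hd, hdl⟩ := rlFill_surj h1 h2
  have : cellOf a2 b2 l = d := by rw [cellOf, ← hdl, posOf_rlFill hd]
  rw [this]; exact ⟨hd, hdl⟩

lemma T_mem_Icc {c : ℕ × ℕ} (hc : c ∈ SkewCells b1 a1) :
    1 ≤ T c ∧ T c ≤ (SkewCells a2 b2).card := by
  have := (hT_std hT).2.1.mapsTo hc
  rw [hT_card hT] at this
  exact this

lemma cellOf_T {c : ℕ × ℕ} (hc : c ∈ SkewCells b1 a1) :
    cellOf a2 b2 (T c) ∈ SkewCells a2 b2 ∧ rlFill a2 b2 (cellOf a2 b2 (T c)) = T c :=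
  cellOf_spec hT (T_mem_Icc hT hc).1 (T_mem_Icc hT hc).2

lemma pos2_cellOf_T {c : ℕ × ℕ} (hc : c ∈ SkewCells b1 a1) :
    pos2 a2 b2 T (cellOf a2 b2 (T c)) = c := by
  rw [pos2, (cellOf_T hT hc).2]
  exact std_posOf_self (hT_std hT) hc

lemma Dv_row_step {i j : ℕ} (h1 : (i, j) ∈ SkewCells a2 b2)
    (h2 : (i, j + 1) ∈ SkewCells a2 b2) :
    Dv r a2 b2 T (i, j) + 1 ≤ Dv r a2 b2 T (i, j + 1) := by
  have := (hT_H hT i j h1 h2).2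
  simp only [Dv, rowRuleEntry]
  push_cast
  omega

lemma Dv_col_step {i j : ℕ} (h1 : (i, j) ∈ SkewCells a2 b2)
    (h2 : (i + 1, j) ∈ SkewCells a2 b2) :
    Dv r a2 b2 T (i, j) ≤ Dv r a2 b2 T (i + 1, j) := by
  have := (hT_V hT i j h1 h2).1
  simp only [Dv, rowRuleEntry]
  push_cast
  omega

lemma Dv_row_chain : ∀ (k : ℕ) {x y : ℕ},
    (x, y) ∈ SkewCells a2 b2 → (x, y + k) ∈ SkewCells a2 b2 →
    Dv r a2 b2 T (x, y) ≤ Dv r a2 b2 T (x, y + k) := by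
  intro k
  induction k with
  | zero => intro x y h1 h2; simp
  | succ k ih =>
    intro x y h1 h2
    have hm : (x, y + k) ∈ SkewCells a2 b2 :=
      skew_horiz h1 h2 (Nat.le_add_right _ _) (by omega)
    have := ih h1 hm
    have hstep := Dv_row_step (r := r) hT hm (by rw [show y + k + 1 = y + (k+1) by ring]; exact h2)
    rw [show y + (k + 1) = y + k + 1 by ring]
    omega

lemma Dv_col_chain : ∀ (k : ℕ) {x y : ℕ},
    (x, y) ∈ SkewCells a2 b2 → (x + k, y) ∈ SkewCells a2 b2 →
    Dv r a2 b2 T (x, y) ≤ Dv r a2 b2 T (x + k, y) := by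
  intro k
  induction k with
  | zero => intro x y h1 h2; simp
  | succ k ih =>
    intro x y h1 h2
    have hm : (x + k, y) ∈ SkewCells a2 b2 :=
      skew_vert h1 h2 (Nat.le_add_right _ _) (by omega)
    have := ih h1 hm
    have hstep := Dv_col_step (r := r) hT hm (by rw [show x + k + 1 = x + (k+1) by ring]; exact h2)
    rw [show x + (k + 1) = x + k + 1 by ring]
    omega

lemma Dv_mono {c' c : ℕ × ℕ} (hc' : c' ∈ SkewCells a2 b2) (hc : c ∈ SkewCells a2 b2)
    (h1 : c'.1 ≤ c.1) (h2 : c'.2 ≤ c.2) :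
    Dv r a2 b2 T c' ≤ Dv r a2 b2 T c := by
  obtain ⟨x', y'⟩ := c'
  obtain ⟨x, y⟩ := c
  simp only at h1 h2
  have hcorner : (x, y') ∈ SkewCells a2 b2 := skew_corner hc' hc h1 h2
  have hv := Dv_col_chain (r := r) hT (x - x') hc'
    (by rw [show x' + (x - x') = x by omega]; exact hcorner)
  rw [show x' + (x - x') = x by omega] at hv
  have hh := Dv_row_chain (r := r) hT (y - y') hcorner
    (by rw [show y' + (y - y') = y by omega]; exact hc)
  rw [show y' + (y - y') = y by omega] at hh
  omega

omit hT

lemma goodS_subset : GoodS r a2 b2 T ⊆ SkewCells a2 b2 := Finset.filter_subset _ _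

include hT in
lemma lam2_lower : IsLowerSet (↑(a2.cells \ GoodS r a2 b2 T) : Set (ℕ × ℕ)) := by
  intro c c' hle hc
  simp only [Finset.coe_sdiff, Set.mem_diff, Finset.mem_coe] at hc ⊢
  obtain ⟨hca, hcg⟩ := hc
  refine ⟨a2.isLowerSet hle hca, fun hc'g => ?_⟩
  have hc's : c' ∈ SkewCells a2 b2 := goodS_subset hc'g
  have hcs : c ∈ SkewCells a2 b2 := by
    rw [SkewCells, Finset.mem_sdiff]
    refine ⟨hca, fun hb => ?_⟩
    have : c' ∈ b2.cells := b2.isLowerSet hle hb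
    exact (Finset.mem_sdiff.1 hc's).2 this
  apply hcg
  rw [GoodS, Finset.mem_filter]
  refine ⟨hcs, le_trans (Finset.mem_filter.1 hc'g).2 ?_⟩
  exact Dv_mono hT hc's hcs hle.1 hle.2

variable (r a2 b2 T) in
/-- The middle diagram `λ₂`. -/
def lam2 : YoungDiagram := ofCells (a2.cells \ GoodS r a2 b2 T)

include hT in
lemma lam2_cells : (lam2 r a2 b2 T).cells = a2.cells \ GoodS r a2 b2 T := by
  rw [lam2, ofCells, dif_pos (lam2_lower hT)]

include hT in
lemma skew_a2_lam2 : SkewCells a2 (lam2 r a2 b2 T) = GoodS r a2 b2 T := by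
  rw [SkewCells, lam2_cells hT]
  ext c
  simp only [Finset.mem_sdiff, not_and, not_not]
  constructor
  · rintro ⟨ha, hg⟩; exact hg ha
  · intro hg
    exact ⟨(Finset.mem_sdiff.1 (goodS_subset hg)).1, fun _ => hg⟩

include hT in
lemma skew_lam2_b2 : SkewCells (lam2 r a2 b2 T) b2 = SkewCells a2 b2 \ GoodS r a2 b2 T := by
  rw [SkewCells, lam2_cells hT, SkewCells]
  ext c
  simp only [Finset.mem_sdiff]
  constructor
  · rintro ⟨⟨ha, hg⟩, hb⟩; exact ⟨⟨ha, hb⟩, hg⟩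
  · rintro ⟨⟨ha, hb⟩, hg⟩; exact ⟨⟨ha, hg⟩, hb⟩

end Construction

section Closure

variable {r : ℕ} {a1 a2 b1 b2 : YoungDiagram} {T : ℕ × ℕ → ℕ}
variable (hT : IsQArrow (a1, a2) (b1, b2) T)

include hT

lemma goodT_subset : goodT r a1 a2 b1 b2 T ⊆ SkewCells b1 a1 := Finset.filter_subset _ _

lemma good_closure_adj {c' c : ℕ × ℕ} (hc' : c' ∈ SkewCells b1 a1)
    (hc : c ∈ SkewCells b1 a1)
    (hadj : c = (c'.1, c'.2 + 1) ∨ c = (c'.1 + 1, c'.2))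
    (hg : cellOf a2 b2 (T c) ∈ GoodS r a2 b2 T) :
    cellOf a2 b2 (T c') ∈ GoodS r a2 b2 T := by
  have hd' : cellOf a2 b2 (T c') ∈ SkewCells a2 b2 := (cellOf_T hT hc').1
  have hd : cellOf a2 b2 (T c) ∈ SkewCells a2 b2 := (cellOf_T hT hc).1
  by_contra hng
  have hpd : pos2 a2 b2 T (cellOf a2 b2 (T c)) = c := pos2_cellOf_T hT hc
  have hpd' : pos2 a2 b2 T (cellOf a2 b2 (T c')) = c' := pos2_cellOf_T hT hc'
  have hDd : 0 ≤ Dv r a2 b2 T (cellOf a2 b2 (T c)) := (Finset.mem_filter.1 hg).2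
  have hDd' : ¬ 0 ≤ Dv r a2 b2 T (cellOf a2 b2 (T c')) :=
    fun h => hng (Finset.mem_filter.2 ⟨hd', h⟩)
  rw [Dv, hpd, rowRuleEntry] at hDd
  rw [Dv, hpd', rowRuleEntry] at hDd'
  have hTlt : T c' < T c := by
    obtain ⟨p, q⟩ := c'
    rcases hadj with rfl | rfl
    · exact (hT_std hT).2.2.1 p q hc' hc
    · exact (hT_std hT).2.2.2 p q hc' hc
  have hprec : prec (cellOf a2 b2 (T c')) (cellOf a2 b2 (T c)) := by
    refine (rlFill_lt_iff_prec hd' hd).1 ?_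
    rw [(cellOf_T hT hc').2, (cellOf_T hT hc).2]
    exact hTlt
  have hrowle : c'.1 ≤ c.1 ∧ c.1 ≤ c'.1 + 1 ∧ c'.2 ≤ c.2 ∧ c.2 ≤ c'.2 + 1 ∧
      (c.1 = c'.1 + 1 → c.2 = c'.2) := by
    rcases hadj with rfl | rfl <;> simp <;> omega
  rcases hprec with hlt | ⟨heq, hlt⟩
  · -- the cell of the smaller label lies strictly above
    have hcol : (cellOf a2 b2 (T c')).2 < (cellOf a2 b2 (T c)).2 := by omega
    have := key_col (hT_H hT) (hT_V hT) hd' hd (le_of_lt hlt) hcol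
    rw [hpd, hpd'] at this
    omega
  · -- same row, smaller label strictly to the right
    omega

lemma goodT_lower_aux : ∀ (n : ℕ) (c c' : ℕ × ℕ), c'.1 + c'.2 + n = c.1 + c.2 →
    c' ≤ c → c ∈ goodT r a1 a2 b1 b2 T →
    c' ∈ a1.cells ∪ goodT r a1 a2 b1 b2 T := by
  intro n
  induction n with
  | zero =>
    intro c c' hsum hle hc
    have : c' = c := by
      obtain ⟨x, y⟩ := c; obtain ⟨x', y'⟩ := c'
      obtain ⟨h1, h2⟩ := hle
      simp only at h1 h2 hsum ⊢
      have : x' = x ∧ y' = y := by omega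
      rw [this.1, this.2]
    rw [this]
    exact Finset.mem_union_right _ hc
  | succ n ih =>
    rintro ⟨x, y⟩ c' hsum hle hc
    have hle1 : c'.1 ≤ x := (Prod.le_def.1 hle).1
    have hle2 : c'.2 ≤ y := (Prod.le_def.1 hle).2
    simp only at hsum
    have hcS : (x, y) ∈ SkewCells b1 a1 := goodT_subset hT hc
    have hcb1 : (x, y) ∈ b1.cells := (Finset.mem_sdiff.1 hcS).1
    have hgc : cellOf a2 b2 (T (x, y)) ∈ GoodS r a2 b2 T := (Finset.mem_filter.1 hc).2
    by_cases h2 : c'.2 < y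
    · have hyp : y - 1 + 1 = y := by omega
      have hc''b1 : (x, y - 1) ∈ b1.cells :=
        b1.isLowerSet (show (x, y - 1) ≤ (x, y) from Prod.le_def.2 ⟨le_rfl, by omega⟩) hcb1
      by_cases ha : (x, y - 1) ∈ a1.cells
      · exact Finset.mem_union_left _ (a1.isLowerSet
          (show c' ≤ (x, y - 1) from Prod.le_def.2 ⟨hle1, show c'.2 ≤ y - 1 by omega⟩) ha)
      · have hc''S : (x, y - 1) ∈ SkewCells b1 a1 := Finset.mem_sdiff.2 ⟨hc''b1, ha⟩
        have hgood'' := good_closure_adj hT hc''S hcS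
          (by left; show (x, y) = (x, y - 1 + 1); rw [hyp]) hgc
        exact ih (x, y - 1) c' (show c'.1 + c'.2 + n = x + (y - 1) by omega)
          (Prod.le_def.2 ⟨hle1, show c'.2 ≤ y - 1 by omega⟩)
          (Finset.mem_filter.2 ⟨hc''S, hgood''⟩)
    · have h1 : c'.1 < x := by omega
      have hxp : x - 1 + 1 = x := by omega
      have hc''b1 : (x - 1, y) ∈ b1.cells :=
        b1.isLowerSet (show (x - 1, y) ≤ (x, y) from Prod.le_def.2 ⟨by omega, le_rfl⟩) hcb1
      by_cases ha : (x - 1, y) ∈ a1.cells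
      · exact Finset.mem_union_left _ (a1.isLowerSet
          (show c' ≤ (x - 1, y) from Prod.le_def.2 ⟨show c'.1 ≤ x - 1 by omega, hle2⟩) ha)
      · have hc''S : (x - 1, y) ∈ SkewCells b1 a1 := Finset.mem_sdiff.2 ⟨hc''b1, ha⟩
        have hgood'' := good_closure_adj hT hc''S hcS
          (by right; show (x, y) = (x - 1 + 1, y); rw [hxp]) hgc
        exact ih (x - 1, y) c' (show c'.1 + c'.2 + n = x - 1 + y by omega)
          (Prod.le_def.2 ⟨show c'.1 ≤ x - 1 by omega, hle2⟩)
          (Finset.mem_filter.2 ⟨hc''S, hgood''⟩)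

lemma lam1_lower : IsLowerSet (↑(a1.cells ∪ goodT r a1 a2 b1 b2 T) : Set (ℕ × ℕ)) := by
  intro c c' hle hc
  simp only [Finset.coe_union, Set.mem_union, Finset.mem_coe] at hc ⊢
  rcases hc with hc | hc
  · exact Or.inl (a1.isLowerSet hle hc)
  · have hle1 : c'.1 ≤ c.1 := (Prod.le_def.1 hle).1
    have hle2 : c'.2 ≤ c.2 := (Prod.le_def.1 hle).2
    have := goodT_lower_aux hT (c.1 + c.2 - (c'.1 + c'.2)) c c' (by omega) hle hc
    rcases Finset.mem_union.1 this with h | h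
    · exact Or.inl h
    · exact Or.inr h

end Closure

section Lam1

variable (r : ℕ) (a1 a2 b1 b2 : YoungDiagram) (T : ℕ × ℕ → ℕ)

/-- The middle diagram `λ₁`. -/
def lam1 : YoungDiagram := ofCells (a1.cells ∪ goodT r a1 a2 b1 b2 T)

variable {r a1 a2 b1 b2 T}
variable (hT : IsQArrow (a1, a2) (b1, b2) T)
include hT

lemma lam1_cells : (lam1 r a1 a2 b1 b2 T).cells = a1.cells ∪ goodT r a1 a2 b1 b2 T := by
  rw [lam1, ofCells, dif_pos (lam1_lower hT)]

lemma skew_lam1_a1 : SkewCells (lam1 r a1 a2 b1 b2 T) a1 = goodT r a1 a2 b1 b2 T := by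
  rw [SkewCells, lam1_cells hT]
  ext c
  simp only [Finset.mem_sdiff, Finset.mem_union]
  constructor
  · rintro ⟨hc | hc, ha⟩
    · exact absurd hc ha
    · exact hc
  · intro hc
    exact ⟨Or.inr hc, (Finset.mem_sdiff.1 (goodT_subset hT hc)).2⟩

lemma skew_b1_lam1 :
    SkewCells b1 (lam1 r a1 a2 b1 b2 T) = SkewCells b1 a1 \ goodT r a1 a2 b1 b2 T := by
  rw [SkewCells, lam1_cells hT, SkewCells]
  ext c
  simp only [Finset.mem_sdiff, Finset.mem_union, not_or]
  tauto

end Lam1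

/-- The sub-tableau of `T` of shape `ν'/μ'`, relabeled via `rl(γ'/δ')`. -/
def subTab (a2 b2 ν' μ' γ' δ' : YoungDiagram) (T : ℕ × ℕ → ℕ) : ℕ × ℕ → ℕ := fun c =>
  if c ∈ SkewCells ν' μ' then rlFill γ' δ' (cellOf a2 b2 (T c)) else 0

section SubConstruction

variable {r : ℕ} {a1 a2 b1 b2 ν' μ' γ' δ' : YoungDiagram} {T : ℕ × ℕ → ℕ}
variable (hT : IsQArrow (a1, a2) (b1, b2) T)
variable (hS : SkewCells ν' μ' =
  (SkewCells b1 a1).filter (fun c => cellOf a2 b2 (T c) ∈ SkewCells γ' δ'))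
variable (hG : SkewCells γ' δ' ⊆ SkewCells a2 b2)

include hS in
lemma sub_mem_iff {c : ℕ × ℕ} : c ∈ SkewCells ν' μ' ↔
    c ∈ SkewCells b1 a1 ∧ cellOf a2 b2 (T c) ∈ SkewCells γ' δ' := by
  rw [hS, Finset.mem_filter]

include hT hS hG in
lemma sub_pos2_mem {d : ℕ × ℕ} (hd : d ∈ SkewCells γ' δ') :
    pos2 a2 b2 T d ∈ SkewCells ν' μ' ∧
      subTab a2 b2 ν' μ' γ' δ' T (pos2 a2 b2 T d) = rlFill γ' δ' d := by
  have hd2 : d ∈ SkewCells a2 b2 := hG hd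
  have hp := pos2_spec hT hd2
  have hco : cellOf a2 b2 (T (pos2 a2 b2 T d)) = d := by
    rw [hp.2, cellOf, posOf_rlFill hd2]
  have hmem : pos2 a2 b2 T d ∈ SkewCells ν' μ' :=
    (sub_mem_iff hS).2 ⟨hp.1, by rw [hco]; exact hd⟩
  refine ⟨hmem, ?_⟩
  simp only [subTab]; rw [if_pos hmem, hco]

include hT hS hG in
lemma sub_card : (SkewCells γ' δ').card = (SkewCells ν' μ').card := by
  refine Finset.card_bij (fun d _ => pos2 a2 b2 T d) ?_ ?_ ?_
  · intro d hd; exact (sub_pos2_mem hT hS hG hd).1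
  · intro d hd d' hd' he
    have h1 := (pos2_spec hT (hG hd)).2
    have h2 := (pos2_spec hT (hG hd')).2
    have he' : pos2 a2 b2 T d = pos2 a2 b2 T d' := he
    rw [he', h2] at h1
    exact (rlFill_injOn (hG hd') (hG hd) h1).symm
  · intro c hc
    obtain ⟨hc1, hc2⟩ := (sub_mem_iff hS).1 hc
    exact ⟨cellOf a2 b2 (T c), hc2, pos2_cellOf_T hT hc1⟩

include hT hS hG in
lemma sub_lt {c c' : ℕ × ℕ} (hc : c ∈ SkewCells ν' μ') (hc' : c' ∈ SkewCells ν' μ')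
    (hlt : T c < T c') :
    subTab a2 b2 ν' μ' γ' δ' T c < subTab a2 b2 ν' μ' γ' δ' T c' := by
  obtain ⟨hc1, hc2⟩ := (sub_mem_iff hS).1 hc
  obtain ⟨hc1', hc2'⟩ := (sub_mem_iff hS).1 hc'
  simp only [subTab]; rw [if_pos hc, if_pos hc']
  refine rlFill_lt_of_prec hc2 hc2' ?_
  refine (rlFill_lt_iff_prec (hG hc2) (hG hc2')).1 ?_
  rw [(cellOf_T hT hc1).2, (cellOf_T hT hc1').2]
  exact hlt

include hT hS hG in
lemma sub_std : IsStdFilling ν' μ' (subTab a2 b2 ν' μ' γ' δ' T) := by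
  refine ⟨fun c hc => by simp only [subTab]; rw [if_neg hc], ⟨?_, ?_, ?_⟩, ?_, ?_⟩
  · -- maps to
    intro c hc
    have hc : c ∈ SkewCells ν' μ' := hc
    obtain ⟨hc1, hc2⟩ := (sub_mem_iff hS).1 hc
    simp only [subTab]; rw [if_pos hc]
    exact ⟨rlFill_pos hc2, le_trans (rlFill_le hc2) (le_of_eq (sub_card hT hS hG))⟩
  · -- inj on
    intro c hc c' hc' he
    have hc : c ∈ SkewCells ν' μ' := hc
    have hc' : c' ∈ SkewCells ν' μ' := hc'
    obtain ⟨hc1, hc2⟩ := (sub_mem_iff hS).1 hc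
    obtain ⟨hc1', hc2'⟩ := (sub_mem_iff hS).1 hc'
    simp only [subTab] at he; rw [if_pos hc, if_pos hc'] at he
    have hd := rlFill_injOn hc2 hc2' he
    have hTc : T c = T c' := by
      have e1 := (cellOf_T hT hc1).2
      have e2 := (cellOf_T hT hc1').2
      rw [hd, e2] at e1
      exact e1.symm
    exact (hT_std hT).2.1.injOn hc1 hc1' hTc
  · -- surj on
    intro l hl
    obtain ⟨hl1, hl2⟩ := hl
    rw [← sub_card hT hS hG] at hl2
    obtain ⟨d, hd, hdl⟩ := rlFill_surj hl1 hl2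
    obtain ⟨hm, hv⟩ := sub_pos2_mem hT hS hG hd
    exact ⟨pos2 a2 b2 T d, hm, by rw [hv, hdl]⟩
  · -- rows increasing
    intro i j h1 h2
    exact sub_lt hT hS hG h1 h2
      ((hT_std hT).2.2.1 i j ((sub_mem_iff hS).1 h1).1 ((sub_mem_iff hS).1 h2).1)
  · -- cols increasing
    intro i j h1 h2
    exact sub_lt hT hS hG h1 h2
      ((hT_std hT).2.2.2 i j ((sub_mem_iff hS).1 h1).1 ((sub_mem_iff hS).1 h2).1)

include hT hS hG in
lemma sub_posOf {d : ℕ × ℕ} (hd : d ∈ SkewCells γ' δ') :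
    posOf (subTab a2 b2 ν' μ' γ' δ' T) (rlFill γ' δ' d) = pos2 a2 b2 T d := by
  obtain ⟨hm, hv⟩ := sub_pos2_mem hT hS hG hd
  refine posOf_eq hv (fun c' h => ?_)
  have hc' : c' ∈ SkewCells ν' μ' := by
    by_contra hx
    simp only [subTab] at h; rw [if_neg hx] at h
    have := rlFill_pos hd
    omega
  refine (sub_std hT hS hG).2.1.injOn hc' hm ?_
  rw [hv]; exact h

include hT hS hG in
lemma sub_RW : subTab a2 b2 ν' μ' γ' δ' T ∈ RWSet ν' μ' γ' δ' := by
  refine ⟨sub_std hT hS hG, ?_, ?_⟩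
  · intro i j h1 h2
    rw [sub_posOf hT hS hG h1, sub_posOf hT hS hG h2]
    exact hT_H hT i j (hG h1) (hG h2)
  · intro i j h1 h2
    rw [sub_posOf hT hS hG h1, sub_posOf hT hS hG h2]
    exact hT_V hT i j (hG h1) (hG h2)

include hT hS hG in
lemma sub_comp {c : ℕ × ℕ} (hc : c ∈ SkewCells ν' μ') :
    rlFill a2 b2 (posOf (rlFill γ' δ') (subTab a2 b2 ν' μ' γ' δ' T c)) = T c := by
  obtain ⟨hc1, hc2⟩ := (sub_mem_iff hS).1 hc
  simp only [subTab]; rw [if_pos hc, posOf_rlFill hc2]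
  exact (cellOf_T hT hc1).2

end SubConstruction

end RW
open RW in
/-- An arrow of the Remmel–Whitney quiver satisfying neither the
`r`-th row rule nor the reverse `r`-th row rule splits as the composition of an arrow
satisfying the row rule followed by an arrow satisfying the reverse row rule. -/
theorem arrow_splitting (r : ℕ) (hr : 0 < r) (a1 a2 b1 b2 : YoungDiagram)
    (T : ℕ × ℕ → ℕ) (hT : IsQArrow (a1, a2) (b1, b2) T)
    (hnot1 : ¬ RowCond r a2 b2 T) (hnot2 : ¬ RevRowCond r a2 b2 T) :
    ∃ (l1 l2 : YoungDiagram) (T1 T2 : ℕ × ℕ → ℕ),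
      IsArrLe r (a1, a2) (l1, l2) T1 ∧ IsArrGt r (l1, l2) (b1, b2) T2 ∧
      T = compTab a1 l1 b1 a2 l2 b2 T1 T2 := by
  classical
  -- nonemptiness of the good and bad regions
  have hGne : ∃ d, d ∈ GoodS r a2 b2 T := by
    rw [RevRowCond] at hnot2
    push_neg at hnot2
    obtain ⟨c, hc, hge⟩ := hnot2
    exact ⟨c, Finset.mem_filter.2 ⟨hc, by simp only [Dv, pos2]; omega⟩⟩
  have hBne : ∃ d, d ∈ SkewCells a2 b2 \ GoodS r a2 b2 T := by
    rw [RowCond] at hnot1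
    push_neg at hnot1
    obtain ⟨c, hc, hge⟩ := hnot1
    refine ⟨c, Finset.mem_sdiff.2 ⟨hc, fun hmem => ?_⟩⟩
    have := (Finset.mem_filter.1 hmem).2
    simp only [Dv, pos2] at this
    omega
  -- abbreviations
  have hS1 : SkewCells (lam1 r a1 a2 b1 b2 T) a1 = (SkewCells b1 a1).filter
      (fun c => cellOf a2 b2 (T c) ∈ SkewCells a2 (lam2 r a2 b2 T)) := by
    rw [skew_lam1_a1 hT, skew_a2_lam2 hT]
    rfl
  have hG1 : SkewCells a2 (lam2 r a2 b2 T) ⊆ SkewCells a2 b2 := by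
    rw [skew_a2_lam2 hT]; exact goodS_subset
  have hS2 : SkewCells b1 (lam1 r a1 a2 b1 b2 T) = (SkewCells b1 a1).filter
      (fun c => cellOf a2 b2 (T c) ∈ SkewCells (lam2 r a2 b2 T) b2) := by
    rw [skew_b1_lam1 hT, skew_lam2_b2 hT]
    ext c
    simp only [Finset.mem_sdiff, Finset.mem_filter]
    constructor
    · rintro ⟨hc, hg⟩
      refine ⟨hc, (cellOf_T hT hc).1, fun hmem => hg ?_⟩
      exact Finset.mem_filter.2 ⟨hc, hmem⟩
    · rintro ⟨hc, hc2, hg⟩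
      refine ⟨hc, fun hmem => hg (Finset.mem_filter.1 hmem).2⟩
  have hG2 : SkewCells (lam2 r a2 b2 T) b2 ⊆ SkewCells a2 b2 := by
    rw [skew_lam2_b2 hT]; exact Finset.sdiff_subset
  refine ⟨lam1 r a1 a2 b1 b2 T, lam2 r a2 b2 T,
    subTab a2 b2 (lam1 r a1 a2 b1 b2 T) a1 a2 (lam2 r a2 b2 T) T,
    subTab a2 b2 b1 (lam1 r a1 a2 b1 b2 T) (lam2 r a2 b2 T) b2 T, ?_, ?_, ?_⟩
  · -- first arrow, with the row rule
    refine ⟨⟨?_, ?_, ?_, ?_, ?_⟩, ?_⟩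
    · -- distinct vertices
      intro h
      have h2 : a2 = lam2 r a2 b2 T := congrArg Prod.snd h
      obtain ⟨d, hd⟩ := hGne
      have hd' : d ∈ SkewCells a2 (lam2 r a2 b2 T) := by rw [skew_a2_lam2 hT]; exact hd
      rw [← h2] at hd'
      exact (Finset.mem_sdiff.1 hd').2 (Finset.mem_sdiff.1 hd').1
    · -- a1 ⊆ λ1
      rw [lam1_cells hT]
      exact Finset.subset_union_left
    · -- λ2 ⊆ a2
      rw [lam2_cells hT]
      exact Finset.sdiff_subset
    · -- cardinalities
      exact (sub_card hT hS1 hG1).symm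
    · -- Remmel–Whitney membership
      exact sub_RW hT hS1 hG1
    · -- row rule
      intro c hc
      rw [sub_posOf hT hS1 hG1 hc]
      rw [skew_a2_lam2 hT] at hc
      have := (Finset.mem_filter.1 hc).2
      simp only [Dv] at this
      omega
  · -- second arrow, with the reverse row rule
    refine ⟨⟨?_, ?_, ?_, ?_, ?_⟩, ?_⟩
    · -- distinct vertices
      intro h
      have h2 : lam2 r a2 b2 T = b2 := congrArg Prod.snd h
      obtain ⟨d, hd⟩ := hBne
      have hd' : d ∈ SkewCells (lam2 r a2 b2 T) b2 := by rw [skew_lam2_b2 hT]; exact hd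
      rw [h2] at hd'
      exact (Finset.mem_sdiff.1 hd').2 (Finset.mem_sdiff.1 hd').1
    · -- λ1 ⊆ b1
      rw [lam1_cells hT]
      intro c hc
      rcases Finset.mem_union.1 hc with hc | hc
      · exact hT.2.1 hc
      · exact (Finset.mem_sdiff.1 (goodT_subset hT hc)).1
    · -- b2 ⊆ λ2
      rw [lam2_cells hT]
      intro c hc
      refine Finset.mem_sdiff.2 ⟨hT.2.2.1 hc, fun hg => ?_⟩
      exact (Finset.mem_sdiff.1 (goodS_subset hg)).2 hc
    · -- cardinalities
      exact (sub_card hT hS2 hG2).symm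
    · -- Remmel–Whitney membership
      exact sub_RW hT hS2 hG2
    · -- reverse row rule
      intro c hc
      rw [sub_posOf hT hS2 hG2 hc]
      rw [skew_lam2_b2 hT] at hc
      obtain ⟨hc1, hc2⟩ := Finset.mem_sdiff.1 hc
      have : ¬ (0 : ℤ) ≤ Dv r a2 b2 T c := fun h => hc2 (Finset.mem_filter.2 ⟨hc1, h⟩)
      simp only [Dv] at this
      omega
  · -- composition identity
    funext c
    by_cases h1 : c ∈ SkewCells (lam1 r a1 a2 b1 b2 T) a1
    · simp only [compTab]
      rw [if_pos h1]
      exact (sub_comp hT hS1 hG1 h1).symm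
    · by_cases h2 : c ∈ SkewCells b1 (lam1 r a1 a2 b1 b2 T)
      · simp only [compTab]
        rw [if_neg h1, if_pos h2]
        exact (sub_comp hT hS2 hG2 h2).symm
      · simp only [compTab]
        rw [if_neg h1, if_neg h2]
        refine (hT_std hT).1 c (fun hc => ?_)
        by_cases hg : cellOf a2 b2 (T c) ∈ GoodS r a2 b2 T
        · exact h1 (by rw [skew_lam1_a1 hT]; exact Finset.mem_filter.2 ⟨hc, hg⟩)
        · refine h2 ?_
          rw [skew_b1_lam1 hT]
          exact Finset.mem_sdiff.2 ⟨hc, fun hm => hg (Finset.mem_filter.1 hm).2⟩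

end
end

section
/- Let r be a positive integer and suppose there is a path in the Remmel–Whitney quiver made up of two arrows, a_{T1} : (α1,α2) → (λ1,λ2) satisfying the r-th row rule followed by a_{T2} : (λ1,λ2) → (β1,β2) satisfying the reverse r-th row rule. Then a_{T1} and a_{T2} are composable: their composition tableau T is a standard tableau of shape β1/α1 belonging to RW_{β1/α1}(α2/β2), so a_T : (α1,α2) → (β1,β2) is an arrow of the quiver. -/
/- Common combinatorial infrastructure: skew shapes, standard fillings,
   Remmel–Whitney sets, Littlewood–Richardson coefficients, Schur functions,
   the Remmel–Whitney quiver and its row-rule subquivers, jeu-de-taquin,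
   infusion, RS correspondence and diffusion. -/

open scoped Classical BigOperators

noncomputable section

namespace RW

lemma mem_skew {ν μ : YoungDiagram} {c : ℕ × ℕ} :
    c ∈ SkewCells ν μ ↔ c ∈ ν.cells ∧ c ∉ μ.cells := Finset.mem_sdiff

/-- reading order: `c` comes strictly before `d` (right-to-left in rows, top-to-bottom). -/
def ro (c d : ℕ × ℕ) : Prop := c.1 < d.1 ∨ (c.1 = d.1 ∧ d.2 < c.2)

lemma ro_trans {c d e : ℕ × ℕ} (h1 : ro c d) (h2 : ro d e) : ro c e := by
  rcases c with ⟨a, b⟩; rcases d with ⟨a', b'⟩; rcases e with ⟨a'', b''⟩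
  unfold ro at *; simp only at *; omega

lemma ro_irrefl (c : ℕ × ℕ) : ¬ ro c c := by unfold ro; omega

lemma ro_total {c d : ℕ × ℕ} (h : c ≠ d) : ro c d ∨ ro d c := by
  rcases c with ⟨a, b⟩; rcases d with ⟨a', b'⟩
  simp only [Ne, Prod.mk.injEq, not_and] at h
  unfold ro; simp only; omega

lemma rl_eq_of_mem {ν μ : YoungDiagram} {c} (hc : c ∈ SkewCells ν μ) :
    rlFill ν μ c = 1 + ((SkewCells ν μ).filter (fun c' => ro c' c)).card := by
  have h : (SkewCells ν μ).filter (fun c' => c'.1 < c.1 ∨ (c'.1 = c.1 ∧ c.2 < c'.2)) =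
      (SkewCells ν μ).filter (fun c' => ro c' c) := Finset.filter_congr fun x _ => Iff.rfl
  simp only [rlFill, if_pos hc, h]

lemma rl_zero {ν μ : YoungDiagram} {c} (hc : c ∉ SkewCells ν μ) : rlFill ν μ c = 0 :=
  if_neg hc

lemma rl_pos {ν μ : YoungDiagram} {c} (hc : c ∈ SkewCells ν μ) : 1 ≤ rlFill ν μ c := by
  rw [rl_eq_of_mem hc]; omega

lemma rl_lt {ν μ : YoungDiagram} {c d} (hc : c ∈ SkewCells ν μ) (hd : d ∈ SkewCells ν μ)
    (h : ro c d) : rlFill ν μ c < rlFill ν μ d := by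
  rw [rl_eq_of_mem hc, rl_eq_of_mem hd]
  have hsub : (SkewCells ν μ).filter (fun c' => ro c' c) ⊆
      (SkewCells ν μ).filter (fun c' => ro c' d) := by
    intro e he; rw [Finset.mem_filter] at *; exact ⟨he.1, ro_trans he.2 h⟩
  have hss : (SkewCells ν μ).filter (fun c' => ro c' c) ⊂
      (SkewCells ν μ).filter (fun c' => ro c' d) := by
    refine (Finset.ssubset_iff_of_subset hsub).2 ⟨c, ?_, ?_⟩
    · rw [Finset.mem_filter]; exact ⟨hc, h⟩
    · rw [Finset.mem_filter]; exact fun h' => ro_irrefl c h'.2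
  have := Finset.card_lt_card hss
  omega

lemma rl_lt_iff {ν μ : YoungDiagram} {c d} (hc : c ∈ SkewCells ν μ) (hd : d ∈ SkewCells ν μ) :
    rlFill ν μ c < rlFill ν μ d ↔ ro c d := by
  constructor
  · intro h
    rcases eq_or_ne c d with rfl | hne
    · omega
    rcases ro_total hne with h' | h'
    · exact h'
    · exact absurd (rl_lt hd hc h') (by omega)
  · exact rl_lt hc hd

lemma rl_injOn {ν μ : YoungDiagram} {c d} (hc : c ∈ SkewCells ν μ) (hd : d ∈ SkewCells ν μ)
    (h : rlFill ν μ c = rlFill ν μ d) : c = d := by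
  by_contra hne
  rcases ro_total hne with h' | h'
  · exact absurd (rl_lt hc hd h') (by omega)
  · exact absurd (rl_lt hd hc h') (by omega)

lemma rl_le_card {ν μ : YoungDiagram} {c} (hc : c ∈ SkewCells ν μ) :
    rlFill ν μ c ≤ (SkewCells ν μ).card := by
  rw [rl_eq_of_mem hc]
  have hsub : (SkewCells ν μ).filter (fun c' => ro c' c) ⊆ (SkewCells ν μ).erase c := by
    intro e he; rw [Finset.mem_filter] at he
    exact Finset.mem_erase.2 ⟨fun h => ro_irrefl c (h ▸ he.2), he.1⟩
  have h1 := Finset.card_le_card hsub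
  rw [Finset.card_erase_of_mem hc] at h1
  have hcpos : 0 < (SkewCells ν μ).card := Finset.card_pos.2 ⟨c, hc⟩
  omega

lemma rl_surj {ν μ : YoungDiagram} {l : ℕ} (h1 : 1 ≤ l) (h2 : l ≤ (SkewCells ν μ).card) :
    ∃ c ∈ SkewCells ν μ, rlFill ν μ c = l := by
  have hinj : Set.InjOn (rlFill ν μ) ↑(SkewCells ν μ) := fun c hc d hd h =>
    rl_injOn (Finset.mem_coe.1 hc) (Finset.mem_coe.1 hd) h
  have himg : (SkewCells ν μ).image (rlFill ν μ) = Finset.Icc 1 (SkewCells ν μ).card := by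
    apply Finset.eq_of_subset_of_card_le
    · intro x hx
      rw [Finset.mem_image] at hx; obtain ⟨c, hc, rfl⟩ := hx
      exact Finset.mem_Icc.2 ⟨rl_pos hc, rl_le_card hc⟩
    · rw [Nat.card_Icc, Finset.card_image_of_injOn hinj]
      omega
  have hmem : l ∈ (SkewCells ν μ).image (rlFill ν μ) := by
    rw [himg]; exact Finset.mem_Icc.2 ⟨h1, h2⟩
  rw [Finset.mem_image] at hmem; exact hmem

lemma posOf_spec {f : ℕ × ℕ → ℕ} {l : ℕ} {c : ℕ × ℕ} (hc : f c = l)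
    (huniq : ∀ c', f c' = l → c' = c) : posOf f l = c := by
  rw [posOf, dif_pos ⟨c, hc⟩]
  exact huniq _ (⟨c, hc⟩ : ∃ c, f c = l).choose_spec

lemma posOf_rl {ν μ : YoungDiagram} {c} (hc : c ∈ SkewCells ν μ) :
    posOf (rlFill ν μ) (rlFill ν μ c) = c := by
  apply posOf_spec rfl
  intro c' h
  have hc' : c' ∈ SkewCells ν μ := by
    by_contra hn
    rw [rl_zero hn] at h
    have := rl_pos hc; omega
  exact rl_injOn hc' hc h

lemma posOf_std {ν μ : YoungDiagram} {T} (hT : IsStdFilling ν μ T) {l : ℕ}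
    (h1 : 1 ≤ l) (h2 : l ≤ (SkewCells ν μ).card) :
    posOf T l ∈ SkewCells ν μ ∧ T (posOf T l) = l := by
  obtain ⟨hzero, hbij, -, -⟩ := hT
  have hmem : l ∈ T '' ↑(SkewCells ν μ) := hbij.2.2 ⟨h1, h2⟩
  obtain ⟨c, hc, hcl⟩ := hmem
  have huniq : ∀ c', T c' = l → c' = c := by
    intro c' h'
    have hc' : c' ∈ SkewCells ν μ := by
      by_contra hn; rw [hzero _ hn] at h'; omega
    exact hbij.2.1 (Finset.mem_coe.2 hc') hc (h'.trans hcl.symm)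
  rw [posOf_spec hcl huniq]
  exact ⟨Finset.mem_coe.1 hc, hcl⟩

lemma posOf_std_self {ν μ : YoungDiagram} {T} (hT : IsStdFilling ν μ T) {c}
    (hc : c ∈ SkewCells ν μ) : posOf T (T c) = c := by
  apply posOf_spec rfl
  intro c' h'
  have hmem := hT.2.1.1 (Finset.mem_coe.2 hc)
  have h1 : 1 ≤ T c := hmem.1
  have hc' : c' ∈ SkewCells ν μ := by
    by_contra hn; rw [hT.1 _ hn] at h'; omega
  exact hT.2.1.2.1 (Finset.mem_coe.2 hc') (Finset.mem_coe.2 hc) h'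

lemma row_chain {ν μ g1 g2 : YoungDiagram} {T} (hT : T ∈ RWSet ν μ g1 g2)
    {i t₁ : ℕ} (t₂ : ℕ) (h12 : t₁ ≤ t₂)
    (hseg : ∀ s, t₁ ≤ s → s ≤ t₂ → (i, s) ∈ SkewCells g1 g2) :
    (posOf T (rlFill g1 g2 (i, t₁))).1 ≤ (posOf T (rlFill g1 g2 (i, t₂))).1 := by
  induction t₂, h12 using Nat.le_induction with
  | base => exact le_rfl
  | succ t₂ h12 ih =>
    have h1 := (hT.2.1 i t₂ (hseg t₂ h12 (by omega)) (hseg (t₂ + 1) (by omega) le_rfl)).2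
    exact le_trans (ih fun s hs1 hs2 => hseg s hs1 (by omega)) h1

end RW
open RW in
/-- A path consisting of an arrow satisfying the `r`-th row rule
followed by an arrow satisfying the reverse `r`-th row rule is composable: the
composition tableau is a standard tableau of shape `β1/α1` lying in
`RW_{β1/α1}(α2/β2)`, hence defines an arrow `(α1,α2) → (β1,β2)` of the quiver. -/
theorem arrows_composable (r : ℕ) (hr : 0 < r) (a1 a2 l1 l2 b1 b2 : YoungDiagram)
    (T1 T2 : ℕ × ℕ → ℕ)
    (h1 : IsArrLe r (a1, a2) (l1, l2) T1) (h2 : IsArrGt r (l1, l2) (b1, b2) T2) :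
    IsQArrow (a1, a2) (b1, b2) (compTab a1 l1 b1 a2 l2 b2 T1 T2) := by
  obtain ⟨⟨hne1, ha1l1, hl2a2, hcard1, hT1⟩, hrow⟩ := h1
  obtain ⟨⟨hne2, hl1b1, hb2l2, hcard2, hT2⟩, hrev⟩ := h2
  have hstd1 : IsStdFilling l1 a1 T1 := hT1.1
  have hstd2 : IsStdFilling b1 l1 T2 := hT2.1
  simp only at ha1l1 hl2a2 hcard1 hl1b1 hb2l2 hcard2 hrow hrev
  set C := compTab a1 l1 b1 a2 l2 b2 T1 T2 with hC
  -- decompositions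
  have hSS : SkewCells b1 a1 = SkewCells l1 a1 ∪ SkewCells b1 l1 := by
    ext c
    simp only [SkewCells, Finset.mem_sdiff, Finset.mem_union]
    have h1 := @hl1b1 c; have h2 := @ha1l1 c; tauto
  have hGG : SkewCells a2 b2 = SkewCells a2 l2 ∪ SkewCells l2 b2 := by
    ext c
    simp only [SkewCells, Finset.mem_sdiff, Finset.mem_union]
    have h1 := @hl2a2 c; have h2 := @hb2l2 c; tauto
  have hdS : Disjoint (SkewCells l1 a1) (SkewCells b1 l1) := by
    rw [Finset.disjoint_left]
    intro c hc hc'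
    exact (mem_skew.1 hc').2 (mem_skew.1 hc).1
  have hdG : Disjoint (SkewCells a2 l2) (SkewCells l2 b2) := by
    rw [Finset.disjoint_left]
    intro c hc hc'
    exact (mem_skew.1 hc).2 (mem_skew.1 hc').1
  have hS1sub : SkewCells l1 a1 ⊆ SkewCells b1 a1 := by rw [hSS]; exact Finset.subset_union_left
  have hS2sub : SkewCells b1 l1 ⊆ SkewCells b1 a1 := by rw [hSS]; exact Finset.subset_union_right
  have hG1sub : SkewCells a2 l2 ⊆ SkewCells a2 b2 := by rw [hGG]; exact Finset.subset_union_left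
  have hG2sub : SkewCells l2 b2 ⊆ SkewCells a2 b2 := by rw [hGG]; exact Finset.subset_union_right
  have hcardS : (SkewCells b1 a1).card = (SkewCells l1 a1).card + (SkewCells b1 l1).card := by
    rw [hSS, Finset.card_union_of_disjoint hdS]
  have hcardG : (SkewCells a2 b2).card = (SkewCells a2 l2).card + (SkewCells l2 b2).card := by
    rw [hGG, Finset.card_union_of_disjoint hdG]
  have hcardSG : (SkewCells b1 a1).card = (SkewCells a2 b2).card := by omega
  -- the maps to the governing shapes
  have hphi1 : ∀ c ∈ SkewCells l1 a1, posOf (rlFill a2 l2) (T1 c) ∈ SkewCells a2 l2 ∧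
      rlFill a2 l2 (posOf (rlFill a2 l2) (T1 c)) = T1 c := by
    intro c hc
    have hTc := hstd1.2.1.1 (Finset.mem_coe.2 hc)
    obtain ⟨z, hz, hzv⟩ := rl_surj (ν := a2) (μ := l2) hTc.1
      (by have h2 := hTc.2; omega)
    have he : posOf (rlFill a2 l2) (T1 c) = z := by rw [← hzv, posOf_rl hz]
    rw [he, hzv]; exact ⟨hz, rfl⟩
  have hphi2 : ∀ c ∈ SkewCells b1 l1, posOf (rlFill l2 b2) (T2 c) ∈ SkewCells l2 b2 ∧
      rlFill l2 b2 (posOf (rlFill l2 b2) (T2 c)) = T2 c := by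
    intro c hc
    have hTc := hstd2.2.1.1 (Finset.mem_coe.2 hc)
    obtain ⟨z, hz, hzv⟩ := rl_surj (ν := l2) (μ := b2) hTc.1
      (by have h2 := hTc.2; omega)
    have he : posOf (rlFill l2 b2) (T2 c) = z := by rw [← hzv, posOf_rl hz]
    rw [he, hzv]; exact ⟨hz, rfl⟩
  -- unfolding of C
  have hC1 : ∀ c ∈ SkewCells l1 a1, C c = rlFill a2 b2 (posOf (rlFill a2 l2) (T1 c)) := by
    intro c hc; rw [hC]; simp only [compTab, if_pos hc]
  have hC2 : ∀ c ∈ SkewCells b1 l1, C c = rlFill a2 b2 (posOf (rlFill l2 b2) (T2 c)) := by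
    intro c hc
    have hn : c ∉ SkewCells l1 a1 := Finset.disjoint_right.1 hdS hc
    rw [hC]; simp only [compTab, if_neg hn, if_pos hc]
  have hC0 : ∀ c, c ∉ SkewCells b1 a1 → C c = 0 := by
    intro c hcn
    have h1 : c ∉ SkewCells l1 a1 := fun h => hcn (hS1sub h)
    have h2 : c ∉ SkewCells b1 l1 := fun h => hcn (hS2sub h)
    rw [hC]; simp only [compTab, if_neg h1, if_neg h2]
  -- positions of labels in C
  have hpc1 : ∀ z ∈ SkewCells a2 l2,
      posOf T1 (rlFill a2 l2 z) ∈ SkewCells l1 a1 ∧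
      T1 (posOf T1 (rlFill a2 l2 z)) = rlFill a2 l2 z ∧
      posOf C (rlFill a2 b2 z) = posOf T1 (rlFill a2 l2 z) := by
    intro z hz
    have hl1' : 1 ≤ rlFill a2 l2 z := rl_pos hz
    have hl2' : rlFill a2 l2 z ≤ (SkewCells l1 a1).card := by
      have := rl_le_card hz; omega
    obtain ⟨hcmem, hcval⟩ := posOf_std hstd1 hl1' hl2'
    refine ⟨hcmem, hcval, posOf_spec ?_ ?_⟩
    · rw [hC1 _ hcmem, hcval, posOf_rl hz]
    · intro c' h'
      have hne0 : rlFill a2 b2 z ≠ 0 := by have := rl_pos (hG1sub hz); omega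
      have hc'SS : c' ∈ SkewCells b1 a1 := by
        by_contra hn; rw [hC0 c' hn] at h'; exact hne0 h'.symm
      rw [hSS, Finset.mem_union] at hc'SS
      rcases hc'SS with hm1 | hm2
      · obtain ⟨hz', hz'v⟩ := hphi1 c' hm1
        rw [hC1 c' hm1] at h'
        have hee : posOf (rlFill a2 l2) (T1 c') = z :=
          rl_injOn (hG1sub hz') (hG1sub hz) h'
        have : T1 c' = rlFill a2 l2 z := by rw [← hee, hz'v]
        exact hstd1.2.1.2.1 (Finset.mem_coe.2 hm1) (Finset.mem_coe.2 hcmem)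
          (this.trans hcval.symm)
      · obtain ⟨hz', hz'v⟩ := hphi2 c' hm2
        rw [hC2 c' hm2] at h'
        have hee : posOf (rlFill l2 b2) (T2 c') = z :=
          rl_injOn (hG2sub hz') (hG1sub hz) h'
        exact absurd hz (Finset.disjoint_right.1 hdG (hee ▸ hz'))
  have hpc2 : ∀ z ∈ SkewCells l2 b2,
      posOf T2 (rlFill l2 b2 z) ∈ SkewCells b1 l1 ∧
      T2 (posOf T2 (rlFill l2 b2 z)) = rlFill l2 b2 z ∧
      posOf C (rlFill a2 b2 z) = posOf T2 (rlFill l2 b2 z) := by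
    intro z hz
    have hl1' : 1 ≤ rlFill l2 b2 z := rl_pos hz
    have hl2' : rlFill l2 b2 z ≤ (SkewCells b1 l1).card := by
      have := rl_le_card hz; omega
    obtain ⟨hcmem, hcval⟩ := posOf_std hstd2 hl1' hl2'
    refine ⟨hcmem, hcval, posOf_spec ?_ ?_⟩
    · rw [hC2 _ hcmem, hcval, posOf_rl hz]
    · intro c' h'
      have hne0 : rlFill a2 b2 z ≠ 0 := by have := rl_pos (hG2sub hz); omega
      have hc'SS : c' ∈ SkewCells b1 a1 := by
        by_contra hn; rw [hC0 c' hn] at h'; exact hne0 h'.symm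
      rw [hSS, Finset.mem_union] at hc'SS
      rcases hc'SS with hm1 | hm2
      · obtain ⟨hz', hz'v⟩ := hphi1 c' hm1
        rw [hC1 c' hm1] at h'
        have hee : posOf (rlFill a2 l2) (T1 c') = z :=
          rl_injOn (hG1sub hz') (hG2sub hz) h'
        exact absurd (hee ▸ hz') (Finset.disjoint_right.1 hdG hz)
      · obtain ⟨hz', hz'v⟩ := hphi2 c' hm2
        rw [hC2 c' hm2] at h'
        have hee : posOf (rlFill l2 b2) (T2 c') = z :=
          rl_injOn (hG2sub hz') (hG2sub hz) h'
        have : T2 c' = rlFill l2 b2 z := by rw [← hee, hz'v]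
        exact hstd2.2.1.2.1 (Finset.mem_coe.2 hm2) (Finset.mem_coe.2 hcmem)
          (this.trans hcval.symm)
  -- MAIN mixed lemma
  have hmain : ∀ x ∈ SkewCells a2 l2, ∀ y ∈ SkewCells l2 b2,
      (posOf T1 (rlFill a2 l2 x)).1 ≤ (posOf T2 (rlFill l2 b2 y)).1 → ro x y := by
    intro x hx y hy hle
    by_contra hro
    have hxl2 : x ∉ l2.cells := (mem_skew.1 hx).2
    have hyl2 : y ∈ l2.cells := (mem_skew.1 hy).1
    have hne : x ≠ y := fun h => hxl2 (h ▸ hyl2)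
    rcases ro_total hne with h | h
    · exact hro h
    obtain ⟨xi, xj⟩ := x
    obtain ⟨yi, yj⟩ := y
    rcases h with hlt | ⟨heq, hlt2⟩
    · -- yi < xi : the big argument
      have hQex : ∃ t, ∀ s, t ≤ s → s ≤ xj → (xi, s) ∈ SkewCells a2 l2 :=
        ⟨xj, fun s hs1 hs2 => by rwa [le_antisymm hs2 hs1]⟩
      have hQt := Nat.find_spec hQex
      set t := Nat.find hQex with htdef
      have htle : t ≤ xj := Nat.find_le (fun s hs1 hs2 => by rwa [le_antisymm hs2 hs1])
      have hch1 : (posOf T1 (rlFill a2 l2 (xi, t))).1 ≤ (posOf T1 (rlFill a2 l2 (xi, xj))).1 :=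
        row_chain hT1 xj htle hQt
      have hr1 := hrow (xi, t) (hQt t le_rfl htle)
      have hvex : ∃ v, (yi, yj + v + 1) ∉ SkewCells l2 b2 := by
        use l2.cells.card
        intro hmem
        have hsub : (Finset.Icc 0 (yj + l2.cells.card + 1)).image (fun j => (yi, j)) ⊆
            l2.cells := by
          intro c hc
          rw [Finset.mem_image] at hc
          obtain ⟨j, hj, rfl⟩ := hc
          rw [Finset.mem_Icc] at hj
          exact l2.up_left_mem le_rfl hj.2 ((mem_skew.1 hmem).1)
        have hcle := Finset.card_le_card hsub
        rw [Finset.card_image_of_injective _ (fun u v huv => by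
          simpa using huv), Nat.card_Icc] at hcle
        omega
      have hvspec := Nat.find_spec hvex
      set v := Nat.find hvex with hvdef
      have hseg2 : ∀ s, yj ≤ s → s ≤ yj + v → (yi, s) ∈ SkewCells l2 b2 := by
        intro s hs1 hs2
        rcases Nat.eq_or_lt_of_le hs1 with heqs | hlts
        · rwa [← heqs]
        · have hw : s - yj - 1 < v := by omega
          have hmn := Nat.find_min hvex hw
          rw [not_not] at hmn
          have : yj + (s - yj - 1) + 1 = s := by omega
          rwa [this] at hmn
      have hch2 : (posOf T2 (rlFill l2 b2 (yi, yj))).1 ≤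
          (posOf T2 (rlFill l2 b2 (yi, yj + v))).1 :=
        row_chain hT2 (yj + v) (by omega) hseg2
      have hr2 := hrev (yi, yj + v) (hseg2 _ (by omega) le_rfl)
      simp only [rowRuleEntry] at hr1 hr2
      have ht2 : yj + v + 2 ≤ t := by omega
      have htm := Nat.find_min hQex (show t - 1 < t by omega)
      push_neg at htm
      obtain ⟨s, hs1, hs2, hs3⟩ := htm
      have hst : s = t - 1 := by
        by_contra hne'
        exact hs3 (hQt s (by omega) hs2)
      subst hst
      have hmema2 : (xi, t - 1) ∈ a2.cells :=
        a2.up_left_mem le_rfl (by omega) (mem_skew.1 hx).1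
      have hmeml2 : (xi, t - 1) ∈ l2.cells := by
        by_contra hn
        exact hs3 (mem_skew.2 ⟨hmema2, hn⟩)
      have hyl2' : (yi, yj + v + 1) ∈ l2.cells :=
        l2.up_left_mem (le_of_lt hlt) (by omega) hmeml2
      have hyb2 : (yi, yj + v + 1) ∈ b2.cells := by
        by_contra hn
        exact hvspec (mem_skew.2 ⟨hyl2', hn⟩)
      have : (yi, yj) ∈ b2.cells := b2.up_left_mem le_rfl (by omega) hyb2
      exact (mem_skew.1 hy).2 this
    · -- yi = xi and xj < yj : x is up-left of y, so x ∈ l2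
      exact hxl2 (l2.up_left_mem (heq.symm.le) (le_of_lt hlt2) hyl2)
  -- strict monotonicity helpers for C
  have hlt11 : ∀ c ∈ SkewCells l1 a1, ∀ c' ∈ SkewCells l1 a1,
      T1 c < T1 c' → C c < C c' := by
    intro c hc c' hc' h
    obtain ⟨hz, hzv⟩ := hphi1 c hc
    obtain ⟨hz', hz'v⟩ := hphi1 c' hc'
    rw [hC1 c hc, hC1 c' hc']
    exact rl_lt (hG1sub hz) (hG1sub hz')
      ((rl_lt_iff hz hz').1 (by rw [hzv, hz'v]; exact h))
  have hlt22 : ∀ c ∈ SkewCells b1 l1, ∀ c' ∈ SkewCells b1 l1,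
      T2 c < T2 c' → C c < C c' := by
    intro c hc c' hc' h
    obtain ⟨hz, hzv⟩ := hphi2 c hc
    obtain ⟨hz', hz'v⟩ := hphi2 c' hc'
    rw [hC2 c hc, hC2 c' hc']
    exact rl_lt (hG2sub hz) (hG2sub hz')
      ((rl_lt_iff hz hz').1 (by rw [hzv, hz'v]; exact h))
  have hltmix : ∀ c ∈ SkewCells l1 a1, ∀ c' ∈ SkewCells b1 l1,
      c.1 ≤ c'.1 → C c < C c' := by
    intro c hc c' hc' hle
    obtain ⟨hz, hzv⟩ := hphi1 c hc
    obtain ⟨hz', hz'v⟩ := hphi2 c' hc'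
    have e1 : posOf T1 (rlFill a2 l2 (posOf (rlFill a2 l2) (T1 c))) = c := by
      rw [hzv]; exact posOf_std_self hstd1 hc
    have e2 : posOf T2 (rlFill l2 b2 (posOf (rlFill l2 b2) (T2 c'))) = c' := by
      rw [hz'v]; exact posOf_std_self hstd2 hc'
    have hro := hmain _ hz _ hz' (by rw [e1, e2]; exact hle)
    rw [hC1 c hc, hC2 c' hc']
    exact rl_lt (hG1sub hz) (hG2sub hz') hro
  -- standardness of C
  have hCstd : IsStdFilling b1 a1 C := by
    refine ⟨hC0, ⟨?_, ?_, ?_⟩, ?_, ?_⟩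
    · -- MapsTo
      intro c hc
      rw [Finset.mem_coe, hSS, Finset.mem_union] at hc
      rcases hc with hc | hc
      · obtain ⟨hz, -⟩ := hphi1 c hc
        rw [hC1 c hc]
        exact ⟨rl_pos (hG1sub hz), by rw [hcardSG]; exact rl_le_card (hG1sub hz)⟩
      · obtain ⟨hz, -⟩ := hphi2 c hc
        rw [hC2 c hc]
        exact ⟨rl_pos (hG2sub hz), by rw [hcardSG]; exact rl_le_card (hG2sub hz)⟩
    · -- InjOn
      intro c hc c' hc' h
      rw [Finset.mem_coe, hSS, Finset.mem_union] at hc hc'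
      rcases hc with hc | hc <;> rcases hc' with hc' | hc'
      · obtain ⟨hz, hzv⟩ := hphi1 c hc
        obtain ⟨hz', hz'v⟩ := hphi1 c' hc'
        rw [hC1 c hc, hC1 c' hc'] at h
        have := rl_injOn (hG1sub hz) (hG1sub hz') h
        exact hstd1.2.1.2.1 (Finset.mem_coe.2 hc) (Finset.mem_coe.2 hc')
          (by rw [← hzv, ← hz'v, this])
      · obtain ⟨hz, hzv⟩ := hphi1 c hc
        obtain ⟨hz', hz'v⟩ := hphi2 c' hc'
        rw [hC1 c hc, hC2 c' hc'] at h
        have := rl_injOn (hG1sub hz) (hG2sub hz') h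
        exact absurd (this ▸ hz) (Finset.disjoint_right.1 hdG hz')
      · obtain ⟨hz, hzv⟩ := hphi2 c hc
        obtain ⟨hz', hz'v⟩ := hphi1 c' hc'
        rw [hC2 c hc, hC1 c' hc'] at h
        have := rl_injOn (hG2sub hz) (hG1sub hz') h
        exact absurd (this ▸ hz) (Finset.disjoint_left.1 hdG hz')
      · obtain ⟨hz, hzv⟩ := hphi2 c hc
        obtain ⟨hz', hz'v⟩ := hphi2 c' hc'
        rw [hC2 c hc, hC2 c' hc'] at h
        have := rl_injOn (hG2sub hz) (hG2sub hz') h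
        exact hstd2.2.1.2.1 (Finset.mem_coe.2 hc) (Finset.mem_coe.2 hc')
          (by rw [← hzv, ← hz'v, this])
    · -- SurjOn
      intro l hl
      obtain ⟨hl1', hl2'⟩ := hl
      obtain ⟨z, hz, hzv⟩ := rl_surj (ν := a2) (μ := b2) hl1' (by omega)
      rw [hGG, Finset.mem_union] at hz
      rcases hz with hz | hz
      · obtain ⟨hcm, hcv, -⟩ := hpc1 z hz
        refine ⟨posOf T1 (rlFill a2 l2 z), Finset.mem_coe.2 (hS1sub hcm), ?_⟩
        rw [hC1 _ hcm, hcv, posOf_rl hz, hzv]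
      · obtain ⟨hcm, hcv, -⟩ := hpc2 z hz
        refine ⟨posOf T2 (rlFill l2 b2 z), Finset.mem_coe.2 (hS2sub hcm), ?_⟩
        rw [hC2 _ hcm, hcv, posOf_rl hz, hzv]
    · -- rows strictly increasing
      intro i j hc hc'
      rw [hSS, Finset.mem_union] at hc hc'
      rcases hc with hc | hc <;> rcases hc' with hc' | hc'
      · exact hlt11 _ hc _ hc' (hstd1.2.2.1 i j hc hc')
      · exact hltmix _ hc _ hc' le_rfl
      · exfalso
        exact (mem_skew.1 hc).2
          (l1.up_left_mem le_rfl (by omega) (mem_skew.1 hc').1)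
      · exact hlt22 _ hc _ hc' (hstd2.2.2.1 i j hc hc')
    · -- columns strictly increasing
      intro i j hc hc'
      rw [hSS, Finset.mem_union] at hc hc'
      rcases hc with hc | hc <;> rcases hc' with hc' | hc'
      · exact hlt11 _ hc _ hc' (hstd1.2.2.2 i j hc hc')
      · exact hltmix _ hc _ hc' (by omega)
      · exfalso
        exact (mem_skew.1 hc).2
          (l1.up_left_mem (by omega) le_rfl (mem_skew.1 hc').1)
      · exact hlt22 _ hc _ hc' (hstd2.2.2.2 i j hc hc')
  -- the RW pattern conditions
  have hRW1 : ∀ i j : ℕ, (i, j) ∈ SkewCells a2 b2 → (i, j + 1) ∈ SkewCells a2 b2 →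
      (posOf C (rlFill a2 b2 (i, j + 1))).2 < (posOf C (rlFill a2 b2 (i, j))).2 ∧
      (posOf C (rlFill a2 b2 (i, j))).1 ≤ (posOf C (rlFill a2 b2 (i, j + 1))).1 := by
    intro i j hc hc'
    rw [hGG, Finset.mem_union] at hc hc'
    rcases hc with hc | hc <;> rcases hc' with hc' | hc'
    · rw [(hpc1 _ hc).2.2, (hpc1 _ hc').2.2]
      exact hT1.2.1 i j hc hc'
    · exfalso
      exact (mem_skew.1 hc).2 (l2.up_left_mem le_rfl (by omega) (mem_skew.1 hc').1)
    · -- (i,j) ∈ l2/b2, (i,j+1) ∈ a2/l2 : mixed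
      rw [(hpc2 _ hc).2.2, (hpc1 _ hc').2.2]
      have hd1 := (hpc1 _ hc').1
      have hd2 := (hpc2 _ hc).1
      have hr1 := hrow (i, j + 1) hc'
      have hr2 := hrev (i, j) hc
      simp only [rowRuleEntry] at hr1 hr2
      have hle : (posOf T2 (rlFill l2 b2 (i, j))).1 ≤
          (posOf T1 (rlFill a2 l2 (i, j + 1))).1 := by omega
      refine ⟨?_, hle⟩
      by_contra hn
      push_neg at hn
      have : (posOf T2 (rlFill l2 b2 (i, j))) ∈ l1.cells := by
        exact l1.up_left_mem hle hn (mem_skew.1 hd1).1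
      exact (mem_skew.1 hd2).2 this
    · rw [(hpc2 _ hc).2.2, (hpc2 _ hc').2.2]
      exact hT2.2.1 i j hc hc'
  have hRW2 : ∀ i j : ℕ, (i, j) ∈ SkewCells a2 b2 → (i + 1, j) ∈ SkewCells a2 b2 →
      (posOf C (rlFill a2 b2 (i, j))).1 < (posOf C (rlFill a2 b2 (i + 1, j))).1 ∧
      (posOf C (rlFill a2 b2 (i + 1, j))).2 ≤ (posOf C (rlFill a2 b2 (i, j))).2 := by
    intro i j hc hc'
    rw [hGG, Finset.mem_union] at hc hc'
    rcases hc with hc | hc <;> rcases hc' with hc' | hc'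
    · rw [(hpc1 _ hc).2.2, (hpc1 _ hc').2.2]
      exact hT1.2.2 i j hc hc'
    · exfalso
      exact (mem_skew.1 hc).2 (l2.up_left_mem (by omega) le_rfl (mem_skew.1 hc').1)
    · -- (i,j) ∈ l2/b2, (i+1,j) ∈ a2/l2 : mixed
      rw [(hpc2 _ hc).2.2, (hpc1 _ hc').2.2]
      have hd1 := (hpc1 _ hc').1
      have hd2 := (hpc2 _ hc).1
      have hr1 := hrow (i + 1, j) hc'
      have hr2 := hrev (i, j) hc
      simp only [rowRuleEntry] at hr1 hr2
      have hlt : (posOf T2 (rlFill l2 b2 (i, j))).1 <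
          (posOf T1 (rlFill a2 l2 (i + 1, j))).1 := by omega
      refine ⟨hlt, ?_⟩
      by_contra hn
      push_neg at hn
      have : (posOf T2 (rlFill l2 b2 (i, j))) ∈ l1.cells := by
        exact l1.up_left_mem (le_of_lt hlt) (le_of_lt hn) (mem_skew.1 hd1).1
      exact (mem_skew.1 hd2).2 this
    · rw [(hpc2 _ hc).2.2, (hpc2 _ hc').2.2]
      exact hT2.2.2 i j hc hc'
  -- the vertices are distinct
  have hS1ne : (SkewCells l1 a1).Nonempty := by
    rw [← Finset.card_pos]
    by_contra hn
    push_neg at hn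
    have h0 : (SkewCells l1 a1).card = 0 := by omega
    apply hne1
    have e1 : a1 = l1 := by
      ext c
      have hemp : SkewCells l1 a1 = ∅ := Finset.card_eq_zero.1 h0
      constructor
      · intro hmem; exact ha1l1 hmem
      · intro hmem
        by_contra hnn
        have : c ∈ SkewCells l1 a1 := mem_skew.2 ⟨hmem, hnn⟩
        rw [hemp] at this; exact absurd this (Finset.notMem_empty c)
    have e2 : a2 = l2 := by
      ext c
      have h0' : (SkewCells a2 l2).card = 0 := by omega
      have hemp : SkewCells a2 l2 = ∅ := Finset.card_eq_zero.1 h0'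
      constructor
      · intro hmem
        by_contra hnn
        have : c ∈ SkewCells a2 l2 := mem_skew.2 ⟨hmem, hnn⟩
        rw [hemp] at this; exact absurd this (Finset.notMem_empty c)
      · intro hmem; exact hl2a2 hmem
    rw [e1, e2]
  have hvne : (a1, a2) ≠ (b1, b2) := by
    intro h
    obtain ⟨c, hcm⟩ := hS1ne
    have hb : a1 = b1 := congrArg Prod.fst h
    exact (mem_skew.1 hcm).2 (hb ▸ hl1b1 (mem_skew.1 hcm).1)
  exact ⟨hvne, fun c hc => hl1b1 (ha1l1 hc), fun c hc => hl2a2 (hb2l2 hc),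
    hcardSG, hCstd, hRW1, hRW2⟩

end
end
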